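/- Let ℱ be a separable family of measurable functions f : 𝒳 → ℝ with |f(x)| ≤ M for all x ∈ 𝒳, f ∈ ℱ, for some constant M < ∞. For α ∈ ℝ let 𝒞_α = {L_f(α) : f ∈ ℱ}, and suppose dim(𝒞_α) < ∞ for every α ∈ ℝ. Then for every probability measure μ on (𝒳, 𝒮) and every ε > 0, N_[](ε, ℱ, μ) < ∞. -/

import Mathlib

open MeasureTheory Set Filter

/-- `𝒞` shatters the finite set `D` if every subset of `D` is cut out by some `C ∈ 𝒞`. -/
def Shatters {X : Type*} (𝒞 : Set (Set X)) (D : Finset X) : Prop :=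
  ∀ B ⊆ D, ∃ C ∈ 𝒞, ∀ x ∈ D, x ∈ C ↔ x ∈ B

/-- `𝒞` has finite VC dimension: the cardinalities of shattered finite sets are bounded. -/
def FiniteVC {X : Type*} (𝒞 : Set (Set X)) : Prop :=
  ∃ k : ℕ, ∀ D : Finset X, Shatters 𝒞 D → D.card ≤ k

/-- `π` is a finite measurable partition of the whole space. -/
def IsFinitePartition {X : Type*} [MeasurableSpace X] (π : Set (Set X)) : Prop :=
  π.Finite ∧ (∀ A ∈ π, MeasurableSet A) ∧
    (∀ A ∈ π, ∀ B ∈ π, A ≠ B → Disjoint A B) ∧ ⋃₀ π = Set.univ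

/-- The `π`-boundary of `C`: union of the cells of `π` meeting both `C` and `Cᶜ`
with positive measure. -/
def piBoundary {X : Type*} [MeasurableSpace X] (μ : Measure X) (π : Set (Set X))
    (C : Set X) : Set X :=
  ⋃₀ {A ∈ π | 0 < μ (A ∩ C) * μ (A ∩ Cᶜ)}

/-- `𝒞` is finitely approximable w.r.t. `μ`: for every `ε > 0` there is a finite measurable
partition `π` such that `μ (∂(C : π)) ≤ ε` for every `C ∈ 𝒞`. -/
def FinitelyApproximable {X : Type*} [MeasurableSpace X] (μ : Measure X)
    (𝒞 : Set (Set X)) : Prop :=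
  ∀ ε : ENNReal, 0 < ε → ∃ π : Set (Set X), IsFinitePartition π ∧
    ∀ C ∈ 𝒞, μ (piBoundary μ π C) ≤ ε

/-- A family of sets is separable if some countable subfamily `𝒞₀ ⊆ 𝒞` is pointwise dense:
every `C ∈ 𝒞` is a pointwise limit (of indicator functions) of a sequence from `𝒞₀`. -/
def SeparableSetFamily {X : Type*} (𝒞 : Set (Set X)) : Prop :=
  ∃ 𝒞₀ ⊆ 𝒞, 𝒞₀.Countable ∧ ∀ C ∈ 𝒞, ∃ g : ℕ → Set X, (∀ n, g n ∈ 𝒞₀) ∧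
    ∀ x : X, ∀ᶠ n in Filter.atTop, (x ∈ g n ↔ x ∈ C)

/-- The family `ℱ` of real functions has finite bracketing numbers w.r.t. `μ`: for every
`ε > 0` finitely many `ε`-brackets (pairs of measurable functions `g ≤ h` with
`∫ (h - g) dμ ≤ ε`) cover `ℱ`. -/
def FiniteBracketing {X : Type*} [MeasurableSpace X] (μ : Measure X)
    (ℱ : Set (X → ℝ)) : Prop :=
  ∀ ε : ℝ, 0 < ε → ∃ n : ℕ, ∃ g h : Fin n → X → ℝ,
    (∀ i, Measurable (g i) ∧ Measurable (h i) ∧ (∀ x, g i x ≤ h i x) ∧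
      ∫⁻ x, ENNReal.ofReal (h i x - g i x) ∂μ ≤ ENNReal.ofReal ε) ∧
    ∀ f ∈ ℱ, ∃ i, ∀ x, g i x ≤ f x ∧ f x ≤ h i x

/-- A family `ℱ` of real functions is separable if some countable subfamily `ℱ₀ ⊆ ℱ` is
pointwise dense in `ℱ`. -/
def SeparableFamily {X : Type*} (ℱ : Set (X → ℝ)) : Prop :=
  ∃ ℱ₀ ⊆ ℱ, ℱ₀.Countable ∧ ∀ f ∈ ℱ, ∃ g : ℕ → (X → ℝ), (∀ n, g n ∈ ℱ₀) ∧
    ∀ x : X, Filter.Tendsto (fun n => g n x) Filter.atTop (nhds (f x))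

open ENNReal
open scoped NNReal

namespace VCA

variable {X : Type*} [MeasurableSpace X] (μ : Measure X)

def Splits (C S : Set X) : Prop := 0 < μ (S ∩ C) ∧ 0 < μ (S \ C)

open scoped Classical in
/-- total mass of the members of the countable family split by `C`. -/
noncomputable def splitMass (C : Set X) (g : ℕ → Set X) : ℝ≥0∞ :=
  ∑' n, if Splits μ C (g n) then μ (g n) else 0

/-- `g` is a countable a.e.-partition of `S`. -/
def CtblPart (S : Set X) (g : ℕ → Set X) : Prop :=
  (∀ n, MeasurableSet (g n)) ∧ (∀ n, g n ⊆ S) ∧ Pairwise (Function.onFun Disjoint g) ∧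
    μ (S \ ⋃ n, g n) = 0

def ApproxOn (𝒞 : Set (Set X)) (S : Set X) : Prop :=
  ∀ ε : ℝ≥0∞, 0 < ε → ∃ g : ℕ → Set X, CtblPart μ S g ∧ ∀ C ∈ 𝒞, splitMass μ C g ≤ ε

variable {μ}

lemma not_splits_of_measure_zero {C S : Set X} (h : μ S = 0) : ¬ Splits μ C S := by
  intro hs
  exact absurd (hs.1.trans_le (measure_mono inter_subset_left)) (by simp [h])

lemma splits_mono {C S S' : Set X} (h : Splits μ C S') (hs : S' ⊆ S) : Splits μ C S :=
  ⟨h.1.trans_le (measure_mono (inter_subset_inter hs (subset_refl C))),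
   h.2.trans_le (measure_mono (diff_subset_diff_left hs))⟩

lemma approxOn_of_unsplit {𝒞 : Set (Set X)} {S : Set X} (hS : MeasurableSet S)
    (h : ∀ C ∈ 𝒞, ¬ Splits μ C S) : ApproxOn μ 𝒞 S := by
  classical
  intro ε hε
  refine ⟨fun n => if n = 0 then S else ∅, ⟨?_, ?_, ?_, ?_⟩, ?_⟩
  · intro n; by_cases h : n = 0 <;> simp [h, hS]
  · intro n; by_cases h : n = 0 <;> simp [h]
  · intro n m hnm
    rcases Nat.eq_zero_or_pos n with h | h
    · have : m ≠ 0 := by omega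
      simp [Function.onFun, h, this]
    · have : n ≠ 0 := by omega
      simp [Function.onFun, this]
  · have : S ⊆ ⋃ n, if n = 0 then S else ∅ := by
      intro x hx; exact mem_iUnion.mpr ⟨0, by simpa using hx⟩
    simp [diff_eq_empty.mpr this]
  · intro C hC
    rw [splitMass]
    have : ∀ n : ℕ, (if Splits μ C (if n = 0 then S else ∅) then μ (if n = 0 then S else ∅) else 0) = 0 := by
      intro n
      by_cases hn : n = 0
      · subst hn
        rw [if_pos rfl, if_neg (h C hC)]
      · rw [if_neg hn, if_neg (not_splits_of_measure_zero (by simp))]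
    simp only [this, tsum_zero]
    exact zero_le

lemma approxOn_subset {𝒞 : Set (Set X)} {S T : Set X} (h : ApproxOn μ 𝒞 S)
    (hTm : MeasurableSet T) (hT : T ⊆ S) : ApproxOn μ 𝒞 T := by
  classical
  intro ε hε
  obtain ⟨g, ⟨hgm, hgs, hgd, hgc⟩, hmass⟩ := h ε hε
  have hTmeas : ∀ n, MeasurableSet (g n ∩ T) → True := fun _ _ => trivial
  refine ⟨fun n => g n ∩ T, ⟨?_, ?_, ?_, ?_⟩, ?_⟩
  · intro n; exact (hgm n).inter hTm
  · intro n; exact inter_subset_right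
  · intro n m hnm
    exact (hgd hnm).mono inter_subset_left inter_subset_left
  · have : T \ ⋃ n, g n ∩ T ⊆ S \ ⋃ n, g n := by
      intro x hx
      refine ⟨hT hx.1, fun hmem => hx.2 ?_⟩
      obtain ⟨n, hn⟩ := mem_iUnion.mp hmem
      exact mem_iUnion.mpr ⟨n, hn, hx.1⟩
    exact measure_mono_null this hgc
  · intro C hC
    refine le_trans ?_ (hmass C hC)
    rw [splitMass, splitMass]
    refine Summable.tsum_le_tsum (fun n => ?_) ENNReal.summable ENNReal.summable
    by_cases hs : Splits μ C (g n ∩ T)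
    · rw [if_pos hs, if_pos (splits_mono hs inter_subset_left)]
      exact measure_mono inter_subset_left
    · rw [if_neg hs]; exact zero_le


lemma exhaust [IsFiniteMeasure μ] {S : Set X} (hS : MeasurableSet S) (P : Set X → Prop)
    (hP : ∀ T, T ⊆ S → MeasurableSet T → 0 < μ T →
      ∃ E, E ⊆ T ∧ MeasurableSet E ∧ 0 < μ E ∧ P E) :
    ∃ E : ℕ → Set X, (∀ n, MeasurableSet (E n)) ∧ (∀ n, E n ⊆ S) ∧
      Pairwise (Function.onFun Disjoint E) ∧ (∀ n, P (E n) ∨ E n = ∅) ∧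
      μ (S \ ⋃ n, E n) = 0 := by
  classical
  set cls : Set X → Set (Set X) := fun R => {E | E ⊆ R ∧ MeasurableSet E ∧ P E} with hcls
  set s : Set X → ℝ≥0∞ := fun R => sSup (μ '' cls R) with hs
  set pick : Set X → Set X := fun R =>
    if h : ∃ E ∈ cls R, s R / 2 < μ E then h.choose else ∅ with hpick
  have pick_mem : ∀ R, (pick R ∈ cls R ∧ s R / 2 < μ (pick R)) ∨ pick R = ∅ := by
    intro R
    by_cases h : ∃ E ∈ cls R, s R / 2 < μ E
    · left
      have := h.choose_spec
      rw [hpick]; simp only [h, dif_pos]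
      exact this
    · right; rw [hpick]; simp only [h, dif_neg, not_false_iff]
  have pick_sub : ∀ R, pick R ⊆ R := by
    intro R; rcases pick_mem R with h | h
    · exact h.1.1
    · rw [h]; exact empty_subset _
  have pick_meas : ∀ R, MeasurableSet (pick R) := by
    intro R; rcases pick_mem R with h | h
    · exact h.1.2.1
    · rw [h]; exact MeasurableSet.empty
  have pick_P : ∀ R, P (pick R) ∨ pick R = ∅ := by
    intro R; rcases pick_mem R with h | h
    · exact Or.inl h.1.2.2
    · exact Or.inr h
  have pick_big : ∀ R E, E ∈ cls R → 0 < μ E → μ E / 2 ≤ μ (pick R) := by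
    intro R E hE hpos
    have hle : μ E ≤ s R := le_sSup ⟨E, hE, rfl⟩
    have hsfin : s R ≠ ⊤ := by
      have h1 : s R ≤ μ univ := sSup_le (by rintro _ ⟨F, hF, rfl⟩; exact measure_mono (subset_univ F))
      exact (h1.trans_lt (measure_lt_top μ univ)).ne
    have hs0 : s R ≠ 0 := (hpos.trans_le hle).ne'
    have hhalf : s R / 2 < s R := ENNReal.half_lt_self hs0 hsfin
    obtain ⟨b, hb, hlt⟩ := lt_sSup_iff.mp hhalf
    obtain ⟨F, hF, rfl⟩ := hb
    have hex : ∃ E ∈ cls R, s R / 2 < μ E := ⟨F, hF, hlt⟩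
    rcases pick_mem R with h | h
    · calc μ E / 2 ≤ s R / 2 := by gcongr
        _ ≤ μ (pick R) := h.2.le
    · exfalso
      have := h ▸ (by rw [hpick]; simp only [hex, dif_pos]; exact hex.choose_spec.2 : s R / 2 < μ (pick R))
      simp at this
  set R : ℕ → Set X := fun n => Nat.rec S (fun _ r => r \ pick r) n with hR
  have hRsucc : ∀ n, R (n + 1) = R n \ pick (R n) := fun n => rfl
  have hRzero : R 0 = S := rfl
  have hRmeas : ∀ n, MeasurableSet (R n) := by
    intro n; induction n with
    | zero => exact hS
    | succ n ih => rw [hRsucc]; exact ih.diff (pick_meas _)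
  have hRsub : ∀ n, R n ⊆ S := by
    intro n; induction n with
    | zero => exact subset_refl S
    | succ n ih => rw [hRsucc]; exact diff_subset.trans ih
  have hRmono : ∀ n m, n ≤ m → R m ⊆ R n := by
    intro n m h
    induction h with
    | refl => exact subset_refl _
    | step h ih => exact (by rw [hRsucc]; exact diff_subset : R (_ + 1) ⊆ R _).trans ih
  refine ⟨fun n => pick (R n), fun n => pick_meas _, fun n => (pick_sub _).trans (hRsub n),
    ?_, fun n => pick_P _, ?_⟩
  · intro n m hnm
    have key : ∀ a b : ℕ, a < b → Disjoint (pick (R a)) (pick (R b)) := by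
      intro a b h
      have hsub : pick (R b) ⊆ R a \ pick (R a) := (pick_sub _).trans (hRmono _ _ h)
      exact disjoint_sdiff_right.mono le_rfl hsub
    rcases (Ne.lt_or_gt hnm) with h | h
    · exact key n m h
    · exact (key m n h).symm
  · by_contra hne
    have hpos : 0 < μ (S \ ⋃ n, pick (R n)) := pos_iff_ne_zero.mpr hne
    have hmeasT : MeasurableSet (S \ ⋃ n, pick (R n)) :=
      hS.diff (MeasurableSet.iUnion fun n => pick_meas _)
    obtain ⟨E', hE'sub, hE'meas, hE'pos, hE'P⟩ := hP _ diff_subset hmeasT hpos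
    have hE'R : ∀ n, E' ⊆ R n := by
      intro n; induction n with
      | zero => exact hE'sub.trans diff_subset
      | succ n ih =>
        rw [hRsucc]
        refine subset_diff.mpr ⟨ih, ?_⟩
        have : Disjoint E' (⋃ k, pick (R k)) :=
          disjoint_sdiff_left.mono_left hE'sub
        exact this.mono_right (subset_iUnion (fun k => pick (R k)) n)
    have hbig : ∀ n, μ E' / 2 ≤ μ (pick (R n)) := by
      intro n
      exact pick_big (R n) E' ⟨hE'R n, hE'meas, hE'P⟩ hE'pos
    have hdisj : Pairwise (Function.onFun Disjoint fun n => pick (R n)) := by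
      intro n m hnm
      have key : ∀ a b : ℕ, a < b → Disjoint (pick (R a)) (pick (R b)) := by
        intro a b h
        have hsub : pick (R b) ⊆ R a \ pick (R a) := (pick_sub _).trans (hRmono _ _ h)
        exact disjoint_sdiff_right.mono le_rfl hsub
      rcases (Ne.lt_or_gt hnm) with h | h
      · exact key n m h
      · exact (key m n h).symm
    have hsum : (∑' n, μ (pick (R n))) = μ (⋃ n, pick (R n)) :=
      (measure_iUnion hdisj fun n => pick_meas _).symm
    have htop : (∑' _ : ℕ, μ E' / 2) ≤ ∑' n, μ (pick (R n)) := Summable.tsum_le_tsum hbig ENNReal.summable ENNReal.summable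
    have h2 : (∑' _ : ℕ, μ E' / 2) = ⊤ :=
      ENNReal.tsum_const_eq_top_of_ne_zero (by
        simp only [ne_eq, ENNReal.div_eq_zero_iff]
        push_neg
        exact ⟨hE'pos.ne', ENNReal.ofNat_ne_top⟩)
    rw [h2, hsum] at htop
    exact (measure_lt_top μ univ).ne (top_le_iff.mp (htop.trans (measure_mono (subset_univ _))))



lemma approxOn_empty {𝒞 : Set (Set X)} : ApproxOn μ 𝒞 (∅ : Set X) :=
  approxOn_of_unsplit MeasurableSet.empty
    (fun _ _ => not_splits_of_measure_zero (by simp))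

lemma approxOn_univ_of_dense [IsFiniteMeasure μ] {𝒞 : Set (Set X)}
    (h : ∀ T : Set X, MeasurableSet T → 0 < μ T →
      ∃ E, E ⊆ T ∧ MeasurableSet E ∧ 0 < μ E ∧ ApproxOn μ 𝒞 E) :
    ApproxOn μ 𝒞 (univ : Set X) := by
  classical
  obtain ⟨E, hEm, hEs, hEd, hEP, hEnull⟩ := exhaust (μ := μ) MeasurableSet.univ (ApproxOn μ 𝒞)
    (fun T _ hTm hTpos => h T hTm hTpos)
  have hA : ∀ n, ApproxOn μ 𝒞 (E n) := by
    intro n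
    rcases hEP n with h' | h'
    · exact h'
    · rw [h']; exact approxOn_empty
  intro ε hε
  have hpos : ∀ n : ℕ, (0 : ℝ≥0∞) < ε * 2⁻¹ ^ (n + 1) := by
    intro n
    refine ENNReal.mul_pos hε.ne' (pow_ne_zero _ (by norm_num))
  choose G hG1 hG2 using fun n => hA n (ε * 2⁻¹ ^ (n + 1)) (hpos n)
  refine ⟨fun m => G (Nat.unpair m).1 (Nat.unpair m).2, ⟨?_, ?_, ?_, ?_⟩, ?_⟩
  · intro m; exact (hG1 _).1 _
  · intro m; exact subset_univ _
  · intro m m' hmm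
    have hup : Nat.unpair m ≠ Nat.unpair m' := by
      intro hcon
      exact hmm (by rw [← Nat.pair_unpair m, ← Nat.pair_unpair m', hcon])
    show Disjoint (G (Nat.unpair m).1 (Nat.unpair m).2) (G (Nat.unpair m').1 (Nat.unpair m').2)
    by_cases hii : (Nat.unpair m).1 = (Nat.unpair m').1
    · have hjj : (Nat.unpair m).2 ≠ (Nat.unpair m').2 := by
        intro hcon
        exact hup (Prod.ext hii hcon)
      rw [hii]
      exact (hG1 (Nat.unpair m').1).2.2.1 hjj
    · exact ((hEd hii).mono ((hG1 (Nat.unpair m).1).2.1 (Nat.unpair m).2)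
        ((hG1 (Nat.unpair m').1).2.1 (Nat.unpair m').2))
  · refine measure_mono_null ?_
      (measure_union_null hEnull (measure_iUnion_null fun n => (hG1 n).2.2.2))
    intro x hx
    by_cases hxe : x ∈ ⋃ n, E n
    · obtain ⟨n, hn⟩ := mem_iUnion.mp hxe
      refine Or.inr (mem_iUnion.mpr ⟨n, hn, fun hmem => ?_⟩)
      obtain ⟨j, hj⟩ := mem_iUnion.mp hmem
      exact hx.2 (mem_iUnion.mpr ⟨Nat.pair n j, by simpa [Nat.unpair_pair] using hj⟩)
    · exact Or.inl ⟨trivial, hxe⟩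
  · intro C hC
    have key : splitMass μ C (fun m => G (Nat.unpair m).1 (Nat.unpair m).2)
        = ∑' p : ℕ × ℕ, (if Splits μ C (G p.1 p.2) then μ (G p.1 p.2) else 0) := by
      rw [splitMass]
      exact Equiv.tsum_eq Nat.pairEquiv.symm
        (fun p : ℕ × ℕ => if Splits μ C (G p.1 p.2) then μ (G p.1 p.2) else 0)
    rw [key, ENNReal.tsum_prod']
    have hsum : ∀ i : ℕ, (∑' j, if Splits μ C (G i j) then μ (G i j) else 0) ≤ ε * 2⁻¹ ^ (i + 1) :=
      fun i => hG2 i C hC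
    refine le_trans (ENNReal.tsum_le_tsum hsum) ?_
    have : (∑' i : ℕ, ε * 2⁻¹ ^ (i + 1)) = ε * ∑' i : ℕ, 2⁻¹ ^ (i + 1) := ENNReal.tsum_mul_left
    rw [this]
    have hgeo : (∑' i : ℕ, (2⁻¹ : ℝ≥0∞) ^ (i + 1)) = 1 := by
      have h1 : (∑' i : ℕ, (2⁻¹ : ℝ≥0∞) ^ (i + 1)) = (∑' i : ℕ, (2⁻¹ : ℝ≥0∞) ^ i) * 2⁻¹ := by
        rw [← ENNReal.tsum_mul_right]
        congr 1
        funext i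
        rw [pow_succ]
      rw [h1, ENNReal.tsum_geometric, ENNReal.one_sub_inv_two, inv_inv]
      exact ENNReal.mul_inv_cancel two_ne_zero ENNReal.ofNat_ne_top
    rw [hgeo, mul_one]


def Hered (μ : Measure X) (𝒞 : Set (Set X)) (S₀ : Set X) : Prop :=
  ∀ T, T ⊆ S₀ → MeasurableSet T → 0 < μ T → ¬ ApproxOn μ 𝒞 T

lemma Hered.splits {𝒞 : Set (Set X)} {S₀ T : Set X} (hh : Hered μ 𝒞 S₀) (hT : T ⊆ S₀)
    (hTm : MeasurableSet T) (hTpos : 0 < μ T) : ∃ C ∈ 𝒞, Splits μ C T := by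
  by_contra h
  push_neg at h
  exact hh T hT hTm hTpos (approxOn_of_unsplit hTm h)

lemma Hered.exists_half [IsFiniteMeasure μ] {𝒞 : Set (Set X)} {S₀ T : Set X}
    (hm : ∀ C ∈ 𝒞, MeasurableSet C) (hh : Hered μ 𝒞 S₀) (hT : T ⊆ S₀)
    (hTm : MeasurableSet T) (hTpos : 0 < μ T) :
    ∃ E, E ⊆ T ∧ MeasurableSet E ∧ 0 < μ E ∧ μ E ≤ μ T / 2 := by
  obtain ⟨C, hC, hsp⟩ := hh.splits hT hTm hTpos
  have hCm := hm C hC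
  have hadd : μ (T ∩ C) + μ (T \ C) = μ T := measure_inter_add_diff T hCm
  rcases le_total (μ (T ∩ C)) (μ (T \ C)) with hle | hle
  · refine ⟨T ∩ C, inter_subset_left, hTm.inter hCm, hsp.1, ?_⟩
    rw [ENNReal.le_div_iff_mul_le (Or.inl two_ne_zero) (Or.inl ENNReal.ofNat_ne_top), mul_two]
    calc μ (T ∩ C) + μ (T ∩ C) ≤ μ (T ∩ C) + μ (T \ C) := by gcongr
      _ = μ T := hadd
  · refine ⟨T \ C, diff_subset, hTm.diff hCm, hsp.2, ?_⟩
    rw [ENNReal.le_div_iff_mul_le (Or.inl two_ne_zero) (Or.inl ENNReal.ofNat_ne_top), mul_two]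
    calc μ (T \ C) + μ (T \ C) ≤ μ (T ∩ C) + μ (T \ C) := by gcongr
      _ = μ T := hadd

lemma Hered.exists_small [IsFiniteMeasure μ] {𝒞 : Set (Set X)} {S₀ T : Set X}
    (hm : ∀ C ∈ 𝒞, MeasurableSet C) (hh : Hered μ 𝒞 S₀) (hT : T ⊆ S₀)
    (hTm : MeasurableSet T) (hTpos : 0 < μ T) {η : ℝ≥0∞} (hη : η ≠ 0) :
    ∃ E, E ⊆ T ∧ MeasurableSet E ∧ 0 < μ E ∧ μ E ≤ η := by
  have H : ∀ n : ℕ, ∃ E, E ⊆ T ∧ MeasurableSet E ∧ 0 < μ E ∧ μ E ≤ μ T * 2⁻¹ ^ n := by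
    intro n
    induction n with
    | zero => exact ⟨T, subset_refl T, hTm, hTpos, by simp⟩
    | succ n ih =>
      obtain ⟨E, hEsub, hEm, hEpos, hEle⟩ := ih
      obtain ⟨E', hE'sub, hE'm, hE'pos, hE'le⟩ :=
        hh.exists_half hm (hEsub.trans hT) hEm hEpos
      refine ⟨E', hE'sub.trans hEsub, hE'm, hE'pos, ?_⟩
      calc μ E' ≤ μ E / 2 := hE'le
        _ ≤ μ T * 2⁻¹ ^ n / 2 := by gcongr
        _ = μ T * 2⁻¹ ^ (n + 1) := by
            rw [pow_succ, div_eq_mul_inv, mul_assoc]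
  rcases le_total (μ T) η with hle | hle
  · exact ⟨T, subset_refl T, hTm, hTpos, hle⟩
  · have hTne : μ T ≠ 0 := hTpos.ne'
    have hTtop : μ T ≠ ⊤ := measure_ne_top μ T
    have hq : η / μ T ≠ 0 := (ENNReal.div_pos hη hTtop).ne'
    obtain ⟨n, hn⟩ := ENNReal.exists_inv_two_pow_lt hq
    obtain ⟨E, hEsub, hEm, hEpos, hEle⟩ := H n
    refine ⟨E, hEsub, hEm, hEpos, ?_⟩
    calc μ E ≤ μ T * 2⁻¹ ^ n := hEle
      _ ≤ μ T * (η / μ T) := by gcongr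
      _ = η := ENNReal.mul_div_cancel hTne hTtop

lemma Hered.sierpinski [IsFiniteMeasure μ] {𝒞 : Set (Set X)} {S₀ T : Set X}
    (hm : ∀ C ∈ 𝒞, MeasurableSet C) (hh : Hered μ 𝒞 S₀) (hT : T ⊆ S₀)
    (hTm : MeasurableSet T) {c : ℝ≥0∞} (hc : c ≠ 0) (hcT : c ≤ μ T) :
    ∃ E, E ⊆ T ∧ MeasurableSet E ∧ c / 2 ≤ μ E ∧ μ E ≤ c := by
  classical
  have hctop : c ≠ ⊤ := (hcT.trans_lt (measure_lt_top μ T)).ne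
  obtain ⟨E, hEm, hEs, hEd, hEP, hEnull⟩ := exhaust (μ := μ) hTm (fun E => μ E ≤ c / 2)
    (fun T' hT' hT'm hT'pos => by
      obtain ⟨F, h1, h2, h3, h4⟩ := hh.exists_small hm (hT'.trans hT) hT'm hT'pos
        (η := c / 2) (by simp [hc, ENNReal.ofNat_ne_top])
      exact ⟨F, h1, h2, h3, h4⟩)
  have hEle : ∀ n, μ (E n) ≤ c / 2 := by
    intro n
    rcases hEP n with h' | h'
    · exact h'
    · rw [h']; simp
  have htsum : c ≤ ∑' n, μ (E n) := by
    rw [← measure_iUnion hEd hEm]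
    have hsub : T ⊆ (⋃ n, E n) ∪ (T \ ⋃ n, E n) := fun x hx => by
      by_cases h' : x ∈ ⋃ n, E n
      · exact Or.inl h'
      · exact Or.inr ⟨hx, h'⟩
    calc c ≤ μ T := hcT
      _ ≤ μ ((⋃ n, E n) ∪ (T \ ⋃ n, E n)) := measure_mono hsub
      _ ≤ μ (⋃ n, E n) + μ (T \ ⋃ n, E n) := measure_union_le _ _
      _ = μ (⋃ n, E n) := by rw [hEnull, add_zero]
  have hex : ∃ N, c / 2 ≤ ∑ i ∈ Finset.range N, μ (E i) := by
    by_contra hcon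
    push_neg at hcon
    have hle2 : (∑' n, μ (E n)) ≤ c / 2 := by
      rw [ENNReal.tsum_eq_iSup_sum]
      refine iSup_le fun s => ?_
      obtain ⟨N, hN⟩ := s.exists_nat_subset_range
      exact le_trans (Finset.sum_le_sum_of_subset hN) (hcon N).le
    exact absurd (htsum.trans hle2) (ENNReal.half_lt_self hc hctop).not_ge
  classical
  set N₀ := Nat.find hex with hN₀def
  have hN₀spec : c / 2 ≤ ∑ i ∈ Finset.range N₀, μ (E i) := Nat.find_spec hex
  have hN₀pos : N₀ ≠ 0 := by
    intro h0
    rw [h0] at hN₀spec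
    simp only [Finset.range_zero, Finset.sum_empty, nonpos_iff_eq_zero,
      ENNReal.div_eq_zero_iff] at hN₀spec
    rcases hN₀spec with h' | h'
    · exact hc h'
    · exact ENNReal.ofNat_ne_top h'
  obtain ⟨N', hsucc⟩ := Nat.exists_eq_succ_of_ne_zero hN₀pos
  have hlt : ∑ i ∈ Finset.range N', μ (E i) < c / 2 :=
    lt_of_not_ge (Nat.find_min hex (by omega))
  have hub : ∑ i ∈ Finset.range N₀, μ (E i) ≤ c := by
    rw [hsucc, Finset.sum_range_succ]
    calc ∑ i ∈ Finset.range N', μ (E i) + μ (E N') ≤ c / 2 + c / 2 :=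
        add_le_add hlt.le (hEle N')
      _ = c := ENNReal.add_halves c
  have hdisj : (↑(Finset.range N₀) : Set ℕ).PairwiseDisjoint E :=
    fun i _ j _ hij => hEd hij
  have hmu : μ (⋃ i ∈ Finset.range N₀, E i) = ∑ i ∈ Finset.range N₀, μ (E i) :=
    measure_biUnion_finset hdisj (fun i _ => hEm i)
  refine ⟨⋃ i ∈ Finset.range N₀, E i, iUnion₂_subset fun i _ => hEs i,
    (Finset.range N₀).measurableSet_biUnion (fun i _ => hEm i), ?_, ?_⟩
  · rw [hmu]; exact hN₀spec
  · rw [hmu]; exact hub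


/-- decay factor for the tree argument -/
noncomputable def theta (M : ℕ) : ℝ≥0∞ := 1 - (2 * (M : ℝ≥0∞))⁻¹

lemma theta_lt_one (M : ℕ) : theta M < 1 := by
  rw [theta]
  refine ENNReal.sub_lt_self one_ne_top one_ne_zero ?_
  refine ENNReal.inv_ne_zero.mpr ?_
  exact ENNReal.mul_ne_top ENNReal.ofNat_ne_top (ENNReal.natCast_ne_top M)

open scoped Classical in
/-- `E` decomposes into a countable disjoint family on which every `C ∈ 𝒞` splits at most a
`theta M` fraction of the mass. -/
def Pfam (μ : Measure X) (𝒞 : Set (Set X)) (M : ℕ) (E : Set X) : Prop :=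
  ∃ D : ℕ → Set X, (∀ i, MeasurableSet (D i)) ∧ Pairwise (Function.onFun Disjoint D) ∧
    E = ⋃ i, D i ∧ ∀ C ∈ 𝒞, (∑' i, if Splits μ C (D i) then μ (D i) else 0) ≤ theta M * μ E

lemma pfam_empty {𝒞 : Set (Set X)} {M : ℕ} : Pfam μ 𝒞 M (∅ : Set X) := by
  classical
  refine ⟨fun _ => ∅, fun _ => MeasurableSet.empty, fun i j _ => disjoint_bot_left, by simp, ?_⟩
  intro C hC
  rw [measure_empty, mul_zero, nonpos_iff_eq_zero, ENNReal.tsum_eq_zero]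
  intro i
  show (if Splits μ C (∅ : Set X) then μ (∅ : Set X) else 0) = 0
  rw [if_neg (not_splits_of_measure_zero (by simp))]

open scoped Classical in
lemma block_sum_le [IsFiniteMeasure μ] {𝒞 : Set (Set X)} {M r : ℕ} (hr : 1 ≤ r) (hrM : r ≤ M)
    {D : Fin r → Set X} (hbal : ∀ i j, μ (D i) ≤ 2 * μ (D j))
    (hnos : ¬ ∃ C ∈ 𝒞, ∀ i, Splits μ C (D i)) {C : Set X} (hC : C ∈ 𝒞) :
    (∑ i : Fin r, if Splits μ C (D i) then μ (D i) else 0) ≤ theta M * ∑ i : Fin r, μ (D i) := by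
  push_neg at hnos
  obtain ⟨i₀, hi₀⟩ := hnos C hC
  set tot := ∑ i : Fin r, μ (D i) with htot
  have htotne : tot ≠ ⊤ := (ENNReal.sum_lt_top.mpr fun i _ => measure_lt_top μ (D i)).ne
  have hc2M : (2 * (M : ℝ≥0∞)) ≠ 0 := by
    refine mul_ne_zero two_ne_zero ?_
    exact_mod_cast Nat.one_le_iff_ne_zero.mp (hr.trans hrM)
  have hc2Mtop : (2 * (M : ℝ≥0∞)) ≠ ⊤ :=
    ENNReal.mul_ne_top ENNReal.ofNat_ne_top (ENNReal.natCast_ne_top M)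
  have h2 : (2 * (M : ℝ≥0∞))⁻¹ * tot ≤ μ (D i₀) := by
    have hup : tot ≤ 2 * (M : ℝ≥0∞) * μ (D i₀) := by
      calc tot ≤ ∑ _i : Fin r, 2 * μ (D i₀) := Finset.sum_le_sum fun i _ => hbal i i₀
        _ = (r : ℝ≥0∞) * (2 * μ (D i₀)) := by
            rw [Finset.sum_const, Finset.card_univ, Fintype.card_fin, nsmul_eq_mul]
        _ ≤ (M : ℝ≥0∞) * (2 * μ (D i₀)) := by
            gcongr

        _ = 2 * (M : ℝ≥0∞) * μ (D i₀) := by ring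
    have hmul := mul_le_mul_right hup (2 * (M : ℝ≥0∞))⁻¹
    rwa [← mul_assoc, ENNReal.inv_mul_cancel hc2M hc2Mtop, one_mul] at hmul
  have hkey : tot - μ (D i₀) = ∑ i ∈ Finset.univ.erase i₀, μ (D i) := by
    refine ENNReal.sub_eq_of_eq_add (measure_ne_top μ _) ?_
    exact (Finset.sum_erase_add _ _ (Finset.mem_univ i₀)).symm
  have h1 : (∑ i : Fin r, if Splits μ C (D i) then μ (D i) else 0) ≤ tot - μ (D i₀) := by
    have hsplit : (∑ i : Fin r, if Splits μ C (D i) then μ (D i) else 0)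
        = ∑ i ∈ Finset.univ.erase i₀, (if Splits μ C (D i) then μ (D i) else 0) := by
      rw [← Finset.sum_erase_add _ _ (Finset.mem_univ i₀), if_neg hi₀, add_zero]
    rw [hsplit, hkey]
    refine Finset.sum_le_sum fun i _ => ?_
    split <;> simp
  refine h1.trans ?_
  calc tot - μ (D i₀) ≤ tot - (2 * (M : ℝ≥0∞))⁻¹ * tot := tsub_le_tsub_left h2 tot
    _ = 1 * tot - (2 * (M : ℝ≥0∞))⁻¹ * tot := by rw [one_mul]
    _ = theta M * tot := by
        rw [theta, ENNReal.sub_mul (fun _ _ => htotne)]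

open scoped Classical in
lemma pfam_of_bad [IsFiniteMeasure μ] {𝒞 : Set (Set X)} {M r : ℕ} (hr : 1 ≤ r) (hrM : r ≤ M)
    {D : Fin r → Set X} (hmeas : ∀ i, MeasurableSet (D i))
    (hdisj : Pairwise (Function.onFun Disjoint D))
    (hbal : ∀ i j, μ (D i) ≤ 2 * μ (D j))
    (hnos : ¬ ∃ C ∈ 𝒞, ∀ i, Splits μ C (D i)) : Pfam μ 𝒞 M (⋃ i, D i) := by
  set D' : ℕ → Set X := fun i => if h : i < r then D ⟨i, h⟩ else ∅ with hD'
  have hD'val : ∀ (i : ℕ) (h : i < r), D' i = D ⟨i, h⟩ := by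
    intro i h; simp only [hD', dif_pos h]
  have hD'empty : ∀ (i : ℕ), ¬ i < r → D' i = ∅ := by
    intro i h; simp only [hD', dif_neg h]
  have hD'meas : ∀ i, MeasurableSet (D' i) := by
    intro i
    by_cases h : i < r
    · rw [hD'val i h]; exact hmeas _
    · rw [hD'empty i h]; exact MeasurableSet.empty
  have hD'disj : Pairwise (Function.onFun Disjoint D') := by
    intro i j hij
    show Disjoint (D' i) (D' j)
    by_cases hi : i < r
    · by_cases hj : j < r
      · rw [hD'val i hi, hD'val j hj]
        exact hdisj (by simpa [Fin.ext_iff] using hij)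
      · rw [hD'empty j hj]; exact disjoint_bot_right
    · rw [hD'empty i hi]; exact disjoint_bot_left
  have hUnion : (⋃ i, D i) = ⋃ i, D' i := by
    apply subset_antisymm
    · intro x hx
      obtain ⟨i, hi⟩ := mem_iUnion.mp hx
      refine mem_iUnion.mpr ⟨i.1, ?_⟩
      rw [hD'val i.1 i.isLt]
      simpa using hi
    · intro x hx
      obtain ⟨i, hi⟩ := mem_iUnion.mp hx
      by_cases h : i < r
      · rw [hD'val i h] at hi
        exact mem_iUnion.mpr ⟨⟨i, h⟩, hi⟩
      · rw [hD'empty i h] at hi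
        exact absurd hi (notMem_empty x)
  refine ⟨D', hD'meas, hD'disj, hUnion, ?_⟩
  intro C hC
  have hzero : ∀ i ∉ Finset.range r, (if Splits μ C (D' i) then μ (D' i) else 0) = 0 := by
    intro i hi
    have h : ¬ i < r := by simpa using hi
    rw [hD'empty i h, if_neg (not_splits_of_measure_zero (by simp))]
  rw [tsum_eq_sum hzero]
  have hfs : (∑ i ∈ Finset.range r, if Splits μ C (D' i) then μ (D' i) else 0)
      = ∑ i : Fin r, (if Splits μ C (D i) then μ (D i) else 0) := by
    rw [← Fin.sum_univ_eq_sum_range]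
    refine Finset.sum_congr rfl fun i _ => ?_
    rw [hD'val i.1 i.isLt, Fin.eta]
  rw [hfs]
  have hμU : μ (⋃ i, D i) = ∑ i : Fin r, μ (D i) := by
    rw [measure_iUnion hdisj hmeas, tsum_fintype]
  rw [hμU]
  exact block_sum_le hr hrM hbal hnos hC


open scoped Classical in
lemma tree_step [IsFiniteMeasure μ] {𝒞 : Set (Set X)} {S₀ : Set X} {M : ℕ}
    (hbad : ∀ A, A ⊆ S₀ → MeasurableSet A → 0 < μ A →
      ∃ E, E ⊆ A ∧ MeasurableSet E ∧ 0 < μ E ∧ Pfam μ 𝒞 M E)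
    {T : Set X} (hT : T ⊆ S₀) {g : ℕ → Set X} (hg : CtblPart μ T g) :
    ∃ g' : ℕ → Set X, CtblPart μ T g' ∧
      ∀ C ∈ 𝒞, splitMass μ C g' ≤ theta M * splitMass μ C g := by
  obtain ⟨hgm, hgs, hgd, hgc⟩ := hg
  have hex : ∀ n : ℕ, ∃ H : ℕ → Set X, (∀ k, MeasurableSet (H k)) ∧ (∀ k, H k ⊆ g n) ∧
      Pairwise (Function.onFun Disjoint H) ∧ (∀ k, Pfam μ 𝒞 M (H k) ∨ H k = ∅) ∧
      μ (g n \ ⋃ k, H k) = 0 := by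
    intro n
    exact exhaust (μ := μ) (hgm n) (Pfam μ 𝒞 M)
      (fun T' hT's hT'm hT'pos => hbad T' (hT's.trans ((hgs n).trans hT)) hT'm hT'pos)
  choose H hHm hHs hHd hHP hHnull using hex
  have hPfam : ∀ n k, Pfam μ 𝒞 M (H n k) := by
    intro n k
    rcases hHP n k with h | h
    · exact h
    · rw [h]; exact pfam_empty
  choose D hDm hDd hDU hDmass using hPfam
  -- subsets
  have hDH : ∀ n k i, D n k i ⊆ H n k := by
    intro n k i
    rw [hDU n k]
    exact subset_iUnion _ i
  have hDg : ∀ n k i, D n k i ⊆ g n := fun n k i => (hDH n k i).trans (hHs n k)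
  set u1 : ℕ → ℕ := fun m => (Nat.unpair m).1 with hu1
  set u2 : ℕ → ℕ := fun m => (Nat.unpair (Nat.unpair m).2).1 with hu2
  set u3 : ℕ → ℕ := fun m => (Nat.unpair (Nat.unpair m).2).2 with hu3
  have hrec : ∀ m, Nat.pair (u1 m) (Nat.pair (u2 m) (u3 m)) = m := by
    intro m
    rw [hu1, hu2, hu3]
    simp [Nat.pair_unpair]
  set g' : ℕ → Set X := fun m => D (u1 m) (u2 m) (u3 m) with hg'
  refine ⟨g', ⟨fun m => hDm _ _ _, fun m => (hDg _ _ _).trans ((hgs _).trans (subset_refl T)),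
    ?_, ?_⟩, ?_⟩
  · -- pairwise disjoint
    intro m m' hmm
    show Disjoint (D (u1 m) (u2 m) (u3 m)) (D (u1 m') (u2 m') (u3 m'))
    by_cases h1 : u1 m = u1 m'
    · by_cases h2 : u2 m = u2 m'
      · have h3 : u3 m ≠ u3 m' := by
          intro h3
          exact hmm (by rw [← hrec m, ← hrec m', h1, h2, h3])
        rw [h1, h2]
        exact hDd (u1 m') (u2 m') h3
      · refine (hHd (u1 m) h2).mono (hDH (u1 m) (u2 m) (u3 m)) ?_
        rw [h1]
        exact hDH (u1 m') (u2 m') (u3 m')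
    · exact (hgd h1).mono (hDg _ _ _) (hDg _ _ _)
  · -- cover
    have hsub : T \ (⋃ m, g' m) ⊆ (T \ ⋃ n, g n) ∪ ⋃ n, (g n \ ⋃ k, H n k) := by
      intro x hx
      by_cases hxg : x ∈ ⋃ n, g n
      · obtain ⟨n, hn⟩ := mem_iUnion.mp hxg
        refine Or.inr (mem_iUnion.mpr ⟨n, hn, fun hxH => ?_⟩)
        obtain ⟨k, hk⟩ := mem_iUnion.mp hxH
        rw [hDU n k] at hk
        obtain ⟨i, hi⟩ := mem_iUnion.mp hk
        refine hx.2 (mem_iUnion.mpr ⟨Nat.pair n (Nat.pair k i), ?_⟩)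
        show x ∈ D (u1 _) (u2 _) (u3 _)
        rw [hu1, hu2, hu3]
        simpa [Nat.unpair_pair] using hi
      · exact Or.inl ⟨hx.1, hxg⟩
    refine measure_mono_null hsub (measure_union_null hgc (measure_iUnion_null fun n => hHnull n))
  · -- split mass
    intro C hC
    have hre : splitMass μ C g' = ∑' n, ∑' k, ∑' i,
        (if Splits μ C (D n k i) then μ (D n k i) else 0) := by
      rw [splitMass]
      have e1 : (∑' m, if Splits μ C (g' m) then μ (g' m) else 0)
          = ∑' p : ℕ × ℕ, (if Splits μ C (D p.1 (Nat.unpair p.2).1 (Nat.unpair p.2).2) then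
              μ (D p.1 (Nat.unpair p.2).1 (Nat.unpair p.2).2) else 0) :=
        Equiv.tsum_eq Nat.pairEquiv.symm
          (fun p : ℕ × ℕ => if Splits μ C (D p.1 (Nat.unpair p.2).1 (Nat.unpair p.2).2) then
              μ (D p.1 (Nat.unpair p.2).1 (Nat.unpair p.2).2) else 0)
      rw [e1, ENNReal.tsum_prod']
      congr 1
      funext n
      have e2 : (∑' b : ℕ, if Splits μ C (D n (Nat.unpair b).1 (Nat.unpair b).2) then
            μ (D n (Nat.unpair b).1 (Nat.unpair b).2) else 0)
          = ∑' q : ℕ × ℕ, (if Splits μ C (D n q.1 q.2) then μ (D n q.1 q.2) else 0) :=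
        Equiv.tsum_eq Nat.pairEquiv.symm
          (fun q : ℕ × ℕ => if Splits μ C (D n q.1 q.2) then μ (D n q.1 q.2) else 0)
      rw [show (∑' (b : ℕ), if Splits μ C (D (n, b).1 (Nat.unpair (n, b).2).1 (Nat.unpair (n, b).2).2) then
            μ (D (n, b).1 (Nat.unpair (n, b).2).1 (Nat.unpair (n, b).2).2) else 0)
          = ∑' b : ℕ, if Splits μ C (D n (Nat.unpair b).1 (Nat.unpair b).2) then
            μ (D n (Nat.unpair b).1 (Nat.unpair b).2) else 0 from rfl, e2]
      exact ENNReal.tsum_prod'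
    rw [hre]
    have hinner : ∀ n, (∑' k, ∑' i, (if Splits μ C (D n k i) then μ (D n k i) else 0))
        ≤ theta M * (if Splits μ C (g n) then μ (g n) else 0) := by
      intro n
      by_cases hsp : Splits μ C (g n)
      · rw [if_pos hsp]
        have h1 : ∀ k, (∑' i, (if Splits μ C (D n k i) then μ (D n k i) else 0))
            ≤ theta M * μ (H n k) := fun k => hDmass n k C hC
        refine le_trans (ENNReal.tsum_le_tsum h1) ?_
        rw [ENNReal.tsum_mul_left]
        gcongr
        rw [← measure_iUnion (hHd n) (hHm n)]
        exact measure_mono (iUnion_subset (hHs n))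
      · have h0 : ∀ k i, (if Splits μ C (D n k i) then μ (D n k i) else 0) = 0 := by
          intro k i
          rw [if_neg (fun hsp' => hsp (splits_mono hsp' (hDg n k i)))]
        simp only [h0, tsum_zero, if_neg hsp, mul_zero]
        exact le_refl 0
    refine le_trans (ENNReal.tsum_le_tsum hinner) ?_
    rw [ENNReal.tsum_mul_left, splitMass]

open scoped Classical in
lemma exists_coherent [IsFiniteMeasure μ] {𝒞 : Set (Set X)} {S₀ : Set X} {M : ℕ} (hM : 1 ≤ M)
    (hS₀m : MeasurableSet S₀) (hS₀pos : 0 < μ S₀) (hh : Hered μ 𝒞 S₀) :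
    ∃ A, A ⊆ S₀ ∧ MeasurableSet A ∧ 0 < μ A ∧
      ∀ (r : ℕ) (D : Fin r → Set X), 1 ≤ r → r ≤ M →
        (∀ i, MeasurableSet (D i)) → (∀ i, D i ⊆ A) →
        Pairwise (Function.onFun Disjoint D) → (∀ i, 0 < μ (D i)) →
        (∀ i j, μ (D i) ≤ 2 * μ (D j)) → ∃ C ∈ 𝒞, ∀ i, Splits μ C (D i) := by
  by_contra hcon
  have hbad : ∀ A, A ⊆ S₀ → MeasurableSet A → 0 < μ A →
      ∃ E, E ⊆ A ∧ MeasurableSet E ∧ 0 < μ E ∧ Pfam μ 𝒞 M E := by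
    intro A h1 h2 h3
    by_contra hno
    refine hcon ⟨A, h1, h2, h3, fun r D hr hrM hm hs hd hp hb => ?_⟩
    by_contra hnC
    refine hno ⟨⋃ i, D i, iUnion_subset hs, MeasurableSet.iUnion hm, ?_,
      pfam_of_bad hr hrM hm hd hb hnC⟩
    exact (hp ⟨0, hr⟩).trans_le (measure_mono (subset_iUnion D ⟨0, hr⟩))
  have key : ∀ k : ℕ, ∃ g, CtblPart μ S₀ g ∧
      ∀ C ∈ 𝒞, splitMass μ C g ≤ theta M ^ k * μ S₀ := by
    intro k
    induction k with
    | zero =>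
      refine ⟨fun n => if n = 0 then S₀ else ∅, ⟨?_, ?_, ?_, ?_⟩, ?_⟩
      · intro n; by_cases h : n = 0 <;> simp [h, hS₀m]
      · intro n; by_cases h : n = 0 <;> simp [h]
      · intro n m hnm
        rcases Nat.eq_zero_or_pos n with h | h
        · have : m ≠ 0 := by omega
          simp [Function.onFun, h, this]
        · have : n ≠ 0 := by omega
          simp [Function.onFun, this]
      · have : S₀ ⊆ ⋃ n, if n = 0 then S₀ else ∅ := by
          intro x hx; exact mem_iUnion.mpr ⟨0, by simpa using hx⟩
        simp [diff_eq_empty.mpr this]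
      · intro C hC
        rw [splitMass, pow_zero, one_mul]
        have hz : ∀ n : ℕ, n ≠ 0 →
            (if Splits μ C (if n = 0 then S₀ else ∅) then μ (if n = 0 then S₀ else ∅) else 0) = 0 := by
          intro n hn
          rw [if_neg hn, if_neg (not_splits_of_measure_zero (by simp))]
        rw [tsum_eq_single 0 hz]
        rw [if_pos rfl]
        split
        · exact le_refl _
        · exact zero_le
    | succ k ih =>
      obtain ⟨g, hg, hmass⟩ := ih
      obtain ⟨g', hg', hmass'⟩ := tree_step hbad (subset_refl S₀) hg
      refine ⟨g', hg', fun C hC => ?_⟩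
      calc splitMass μ C g' ≤ theta M * splitMass μ C g := hmass' C hC
        _ ≤ theta M * (theta M ^ k * μ S₀) := by gcongr; exact hmass C hC
        _ = theta M ^ (k + 1) * μ S₀ := by rw [← mul_assoc, ← pow_succ']
  have happrox : ApproxOn μ 𝒞 S₀ := by
    intro ε hε
    have hθtop : theta M ≠ ⊤ := ((tsub_le_self (a := (1:ℝ≥0∞))).trans_lt one_lt_top).ne
    set t := (theta M).toNNReal with ht
    have hco : (t : ℝ≥0∞) = theta M := ENNReal.coe_toNNReal hθtop
    have ht1 : t < 1 := by
      rw [← ENNReal.coe_lt_one_iff, hco]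
      exact theta_lt_one M
    set δ : ℝ≥0∞ := min (ε / μ S₀) 1 with hδ
    have hδ0 : δ ≠ 0 := by
      rw [hδ]
      exact (lt_min (ENNReal.div_pos hε.ne' (measure_ne_top μ S₀)) one_pos).ne'
    have hδtop : δ ≠ ⊤ := ((min_le_right _ _).trans_lt one_lt_top).ne
    obtain ⟨k, hk⟩ := exists_pow_lt_of_lt_one (ENNReal.toNNReal_pos hδ0 hδtop) ht1
    have hθk : theta M ^ k < δ := by
      calc theta M ^ k = ((t ^ k : ℝ≥0) : ℝ≥0∞) := by rw [ENNReal.coe_pow, hco]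
        _ < ((δ.toNNReal : ℝ≥0) : ℝ≥0∞) := ENNReal.coe_lt_coe.mpr hk
        _ = δ := ENNReal.coe_toNNReal hδtop
    obtain ⟨g, hg, hmass⟩ := key k
    refine ⟨g, hg, fun C hC => ?_⟩
    calc splitMass μ C g ≤ theta M ^ k * μ S₀ := hmass C hC
      _ ≤ (ε / μ S₀) * μ S₀ := by
          gcongr
          exact (hθk.trans_le (min_le_left _ _)).le
      _ = ε := ENNReal.div_mul_cancel hS₀pos.ne' (measure_ne_top μ S₀)
  exact hh S₀ (subset_refl S₀) hS₀m hS₀pos happrox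


open scoped Classical in
lemma exists_indep [IsFiniteMeasure μ] {𝒞 : Set (Set X)} {S₀ A : Set X} {M : ℕ}
    (hm : ∀ C ∈ 𝒞, MeasurableSet C)
    (hh : Hered μ 𝒞 S₀) (hA : A ⊆ S₀) (hAm : MeasurableSet A) (hApos : 0 < μ A)
    (hcoh : ∀ (r : ℕ) (D : Fin r → Set X), 1 ≤ r → r ≤ M →
        (∀ i, MeasurableSet (D i)) → (∀ i, D i ⊆ A) →
        Pairwise (Function.onFun Disjoint D) → (∀ i, 0 < μ (D i)) →
        (∀ i j, μ (D i) ≤ 2 * μ (D j)) → ∃ C ∈ 𝒞, ∀ i, Splits μ C (D i))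
    (K : ℕ) (hK : ∀ j, j < K → 2 ^ j ≤ M) :
    ∃ Cs : Fin K → Set X, (∀ i, Cs i ∈ 𝒞) ∧
      ∀ s : Fin K → Bool, ∃ x, ∀ i, x ∈ Cs i ↔ s i = true := by
  have main : ∀ j, j ≤ K → ∃ Cs : Fin j → Set X, ∃ D : (Fin j → Bool) → Set X,
      (∀ i, Cs i ∈ 𝒞) ∧ (∀ s, MeasurableSet (D s)) ∧ (∀ s, D s ⊆ A) ∧
      (∀ s, 0 < μ (D s)) ∧ (∀ s i, D s ⊆ (if s i then Cs i else (Cs i)ᶜ)) := by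
    intro j
    induction j with
    | zero =>
      intro _
      exact ⟨fun i => i.elim0, fun _ => A, fun i => i.elim0, fun _ => hAm,
        fun _ => subset_refl A, fun _ => hApos, fun _ i => i.elim0⟩
    | succ j ih =>
      intro hj1
      obtain ⟨Cs, D, hCsmem, hDm, hDs, hDp, hDmem⟩ := ih (by omega)
      -- disjointness of the cells
      have hDd : Pairwise (Function.onFun Disjoint D) := by
        intro s s' hss
        have hex : ∃ i, s i ≠ s' i := by
          by_contra hno
          push_neg at hno
          exact hss (funext hno)
        obtain ⟨i, hi⟩ := hex
        have h1 := hDmem s i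
        have h2 := hDmem s' i
        show Disjoint (D s) (D s')
        cases hb : s i with
        | false =>
          have hb' : s' i = true := by
            cases hb2 : s' i
            · rw [hb, hb2] at hi; exact absurd rfl hi
            · rfl
          rw [hb, if_neg Bool.false_ne_true] at h1
          rw [hb', if_pos rfl] at h2
          exact disjoint_compl_left.mono h1 h2
        | true =>
          have hb' : s' i = false := by
            cases hb2 : s' i
            · rfl
            · rw [hb, hb2] at hi; exact absurd rfl hi
          rw [hb, if_pos rfl] at h1
          rw [hb', if_neg Bool.false_ne_true] at h2
          exact disjoint_compl_right.mono h1 h2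
      -- the minimum cell mass
      have hne : (Finset.univ : Finset (Fin j → Bool)).Nonempty := Finset.univ_nonempty
      set t := Finset.univ.inf' hne (fun s => μ (D s)) with hts
      obtain ⟨s₀, _, hs₀⟩ := Finset.exists_mem_eq_inf' hne (fun s => μ (D s))
      have htpos : 0 < t := by rw [hts, hs₀]; exact hDp s₀
      have htle : ∀ s, t ≤ μ (D s) := fun s => Finset.inf'_le _ (Finset.mem_univ s)
      have ht2 : t / 2 ≠ 0 := by
        rw [ne_eq, ENNReal.div_eq_zero_iff]
        push_neg
        exact ⟨htpos.ne', ENNReal.ofNat_ne_top⟩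
      -- shrink each cell to a balanced piece
      have hshrink : ∀ s : Fin j → Bool, ∃ E, E ⊆ D s ∧ MeasurableSet E ∧
          (t / 2) / 2 ≤ μ E ∧ μ E ≤ t / 2 :=
        fun s => hh.sierpinski hm ((hDs s).trans hA) (hDm s) ht2
          ((ENNReal.half_le_self).trans (htle s))
      choose E hEsub hEm hElow hEhigh using hshrink
      -- apply coherence to the balanced family
      have hcard : Fintype.card (Fin j → Bool) = 2 ^ j := by
        simp [Fintype.card_fun]
      have e : Fin (2 ^ j) ≃ (Fin j → Bool) := (Fintype.equivFinOfCardEq hcard).symm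
      have hEpos : ∀ s, 0 < μ (E s) :=
        fun s => lt_of_lt_of_le (ENNReal.div_pos ht2 ENNReal.ofNat_ne_top) (hElow s)
      have hjoint : ∃ C ∈ 𝒞, ∀ i : Fin (2 ^ j), Splits μ C (E (e i)) := by
        refine hcoh (2 ^ j) (fun i => E (e i)) Nat.one_le_two_pow (hK j (by omega))
          (fun i => hEm _) (fun i => ((hEsub _).trans (hDs _))) ?_ (fun i => hEpos _) ?_
        · intro i i' hii
          exact ((hDd (fun h => hii (e.injective h))).mono (hEsub _) (hEsub _) : _)
        · intro i i'
          calc μ (E (e i)) ≤ t / 2 := hEhigh _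
            _ = 2 * ((t / 2) / 2) := (ENNReal.mul_div_cancel two_ne_zero ENNReal.ofNat_ne_top).symm
            _ ≤ 2 * μ (E (e i')) := by gcongr; exact hElow _
      obtain ⟨C, hCmem, hCsplit⟩ := hjoint
      have hCsplitD : ∀ s, Splits μ C (D s) := by
        intro s
        have := hCsplit (e.symm s)
        rw [e.apply_symm_apply] at this
        exact splits_mono this (hEsub s)
      -- build the next level
      refine ⟨Fin.snoc Cs C, fun s => D (fun i => s i.castSucc) ∩
        (if s (Fin.last j) then C else Cᶜ), ?_, ?_, ?_, ?_, ?_⟩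
      · intro i
        refine Fin.lastCases ?_ ?_ i
        · rw [Fin.snoc_last]; exact hCmem
        · intro i'; rw [Fin.snoc_castSucc]; exact hCsmem i'
      · intro s
        show MeasurableSet ((D fun i => s i.castSucc) ∩ if s (Fin.last j) = true then C else Cᶜ)
        refine (hDm _).inter ?_
        split
        · exact hm C hCmem
        · exact (hm C hCmem).compl
      · intro s
        show (D fun i => s i.castSucc) ∩ (if s (Fin.last j) = true then C else Cᶜ) ⊆ A
        exact inter_subset_left.trans (hDs _)
      · intro s
        show 0 < μ ((D fun i => s i.castSucc) ∩ if s (Fin.last j) = true then C else Cᶜ)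
        cases hb : s (Fin.last j) with
        | false =>
          rw [if_neg Bool.false_ne_true]
          have h2 := (hCsplitD (fun i => s i.castSucc)).2
          rwa [diff_eq] at h2
        | true =>
          rw [if_pos rfl]
          exact (hCsplitD (fun i => s i.castSucc)).1
      · intro s i
        beta_reduce
        refine Fin.lastCases ?_ ?_ i
        · rw [Fin.snoc_last]
          exact inter_subset_right
        · intro i'
          rw [Fin.snoc_castSucc]
          exact inter_subset_left.trans (hDmem (fun i => s i.castSucc) i')
  obtain ⟨Cs, D, hCsmem, _, _, hDp, hDmem⟩ := main K (le_refl K)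
  refine ⟨Cs, hCsmem, fun s => ?_⟩
  obtain ⟨x, hx⟩ := nonempty_of_measure_ne_zero (hDp s).ne'
  refine ⟨x, fun i => ?_⟩
  have hsi := hDmem s i hx
  cases hb : s i with
  | false =>
    rw [hb, if_neg Bool.false_ne_true] at hsi
    exact iff_of_false hsi (by simp)
  | true =>
    rw [hb, if_pos rfl] at hsi
    exact iff_of_true hsi rfl

lemma shatters_of_indep {𝒞 : Set (Set X)} (d : ℕ) (Cs : Fin (2 ^ (d + 1)) → Set X)
    (hCs : ∀ i, Cs i ∈ 𝒞)
    (hcell : ∀ s : Fin (2 ^ (d + 1)) → Bool, ∃ x, ∀ i, x ∈ Cs i ↔ s i = true) :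
    ∃ Dset : Finset X, Dset.card = d + 1 ∧ Shatters 𝒞 Dset := by
  classical
  have hcard : Fintype.card (Finset (Fin (d + 1))) = 2 ^ (d + 1) := by
    simp [Fintype.card_finset]
  have e : Finset (Fin (d + 1)) ≃ Fin (2 ^ (d + 1)) := Fintype.equivFinOfCardEq hcard
  have hx : ∀ j : Fin (d + 1), ∃ x, ∀ i, x ∈ Cs i ↔ (decide (j ∈ e.symm i) = true) :=
    fun j => hcell (fun i => decide (j ∈ e.symm i))
  choose x hx using hx
  have hmem : ∀ (j : Fin (d + 1)) (i : Fin (2 ^ (d + 1))), x j ∈ Cs i ↔ j ∈ e.symm i := by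
    intro j i
    rw [hx j i]
    simp
  have hinj : Function.Injective x := by
    intro j j' hjj
    have h1 := (hmem j (e {j})).mpr (by rw [e.symm_apply_apply]; exact Finset.mem_singleton_self j)
    rw [hjj] at h1
    have h2 := (hmem j' (e {j})).mp h1
    rw [e.symm_apply_apply] at h2
    exact (Finset.mem_singleton.mp h2).symm
  refine ⟨Finset.univ.image x, ?_, ?_⟩
  · rw [Finset.card_image_of_injective _ hinj, Finset.card_univ, Fintype.card_fin]
  · intro B hB
    set S : Finset (Fin (d + 1)) := Finset.univ.filter (fun j => x j ∈ B) with hS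
    refine ⟨Cs (e S), hCs (e S), ?_⟩
    intro y hy
    obtain ⟨j, _, rfl⟩ := Finset.mem_image.mp hy
    rw [hmem j (e S), e.symm_apply_apply, hS]
    simp only [Finset.mem_filter, Finset.mem_univ, true_and]



open scoped Classical in
lemma finitelyApproximable_of_approxOn_univ [IsProbabilityMeasure μ] {𝒞 : Set (Set X)}
    (h : ApproxOn μ 𝒞 (univ : Set X)) : FinitelyApproximable μ 𝒞 := by
  intro ε hε
  have hε2 : (0 : ℝ≥0∞) < ε / 2 := ENNReal.div_pos hε.ne' ENNReal.ofNat_ne_top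
  obtain ⟨g, ⟨hgm, _, hgd, hgc⟩, hmass⟩ := h (ε / 2) hε2
  have hsumfin : (∑' n, μ (g n)) ≠ ⊤ := by
    rw [← measure_iUnion hgd hgm]
    exact measure_ne_top μ _
  have htail := ENNReal.tendsto_sum_nat_add (fun n => μ (g n)) hsumfin
  obtain ⟨n₀, hn₀⟩ := (ENNReal.tendsto_nhds_zero.mp htail (ε / 2) hε2).exists
  set U : Set X := ⋃ i ∈ Finset.range n₀, g i with hU
  set R : Set X := univ \ U with hR
  have hUm : MeasurableSet U := (Finset.range n₀).measurableSet_biUnion (fun i _ => hgm i)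
  have hRm : MeasurableSet R := MeasurableSet.univ.diff hUm
  set π : Set (Set X) := (g '' {n | n < n₀}) ∪ {R} with hπ
  have hmem : ∀ A ∈ π, (∃ i < n₀, A = g i) ∨ A = R := by
    intro A hA
    rcases hA with hA | hA
    · obtain ⟨i, hi, rfl⟩ := hA
      exact Or.inl ⟨i, hi, rfl⟩
    · exact Or.inr hA
  have hgU : ∀ i, i < n₀ → g i ⊆ U := by
    intro i hi
    rw [hU]
    exact subset_biUnion_of_mem (Finset.mem_range.mpr hi)
  refine ⟨π, ⟨?_, ?_, ?_, ?_⟩, ?_⟩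
  · exact (((Set.finite_lt_nat n₀).image g).union (finite_singleton R))
  · intro A hA
    rcases hmem A hA with ⟨i, _, rfl⟩ | rfl
    · exact hgm i
    · exact hRm
  · intro A hA B hB hAB
    rcases hmem A hA with ⟨i, hi, rfl⟩ | rfl <;> rcases hmem B hB with ⟨j, hj, rfl⟩ | rfl
    · exact hgd (fun hij => hAB (by rw [hij]))
    · exact disjoint_sdiff_right.mono_left (hgU i hi)
    · exact (disjoint_sdiff_right.mono_left (hgU j hj)).symm
    · exact absurd rfl hAB
  · apply subset_antisymm (subset_univ _)
    intro x _
    by_cases hx : x ∈ U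
    · rw [hU] at hx
      simp only [Finset.mem_range, mem_iUnion] at hx
      obtain ⟨i, hi, hxi⟩ := hx
      exact ⟨g i, Or.inl ⟨i, hi, rfl⟩, hxi⟩
    · exact ⟨R, Or.inr rfl, ⟨trivial, hx⟩⟩
  · intro C hC
    have hsub : piBoundary μ π C ⊆
        R ∪ ⋃ i ∈ (Finset.range n₀).filter (fun i => Splits μ C (g i)), g i := by
      intro x hx
      obtain ⟨A, ⟨hAπ, hApos⟩, hxA⟩ := hx
      rcases hmem A hAπ with ⟨i, hi, rfl⟩ | rfl
      · have hsp : Splits μ C (g i) := by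
          rcases ENNReal.mul_pos_iff.mp hApos with ⟨h1, h2⟩
          refine ⟨h1, ?_⟩
          rwa [diff_eq]
        have hif : i ∈ (Finset.range n₀).filter (fun i => Splits μ C (g i)) :=
          Finset.mem_filter.mpr ⟨Finset.mem_range.mpr hi, hsp⟩
        exact Or.inr (Set.mem_biUnion hif hxA)
      · exact Or.inl hxA
    have hRsmall : μ R ≤ ε / 2 := by
      have hsub2 : R ⊆ (univ \ ⋃ n, g n) ∪ ⋃ k, g (k + n₀) := by
        intro x hx
        by_cases hxg : x ∈ ⋃ n, g n
        · obtain ⟨n, hn⟩ := mem_iUnion.mp hxg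
          have hn₀le : n₀ ≤ n := by
            by_contra hlt
            exact hx.2 (hgU n (by omega) hn)
          refine Or.inr (mem_iUnion.mpr ⟨n - n₀, ?_⟩)
          rw [Nat.sub_add_cancel hn₀le]
          exact hn
        · exact Or.inl ⟨trivial, hxg⟩
      calc μ R ≤ μ ((univ \ ⋃ n, g n) ∪ ⋃ k, g (k + n₀)) := measure_mono hsub2
        _ ≤ μ (univ \ ⋃ n, g n) + μ (⋃ k, g (k + n₀)) := measure_union_le _ _
        _ = μ (⋃ k, g (k + n₀)) := by rw [hgc, zero_add]
        _ ≤ ∑' k, μ (g (k + n₀)) := measure_iUnion_le _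
        _ ≤ ε / 2 := hn₀
    have hSplitSmall : μ (⋃ i ∈ (Finset.range n₀).filter (fun i => Splits μ C (g i)), g i)
        ≤ ε / 2 := by
      calc μ (⋃ i ∈ (Finset.range n₀).filter (fun i => Splits μ C (g i)), g i)
          ≤ ∑ i ∈ (Finset.range n₀).filter (fun i => Splits μ C (g i)), μ (g i) :=
            measure_biUnion_finset_le _ _
        _ = ∑ i ∈ (Finset.range n₀).filter (fun i => Splits μ C (g i)),
              (if Splits μ C (g i) then μ (g i) else 0) := by
            refine Finset.sum_congr rfl fun i hi => ?_
            rw [if_pos (Finset.mem_filter.mp hi).2]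
        _ ≤ ∑' i, (if Splits μ C (g i) then μ (g i) else 0) := ENNReal.sum_le_tsum _
        _ ≤ ε / 2 := hmass C hC
    calc μ (piBoundary μ π C)
        ≤ μ (R ∪ ⋃ i ∈ (Finset.range n₀).filter (fun i => Splits μ C (g i)), g i) :=
          measure_mono hsub
      _ ≤ μ R + μ (⋃ i ∈ (Finset.range n₀).filter (fun i => Splits μ C (g i)), g i) :=
          measure_union_le _ _
      _ ≤ ε / 2 + ε / 2 := add_le_add hRsmall hSplitSmall
      _ = ε := ENNReal.add_halves ε

theorem finitelyApproximable_of_finiteVC [IsProbabilityMeasure μ] {𝒞 : Set (Set X)}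
    (hm : ∀ C ∈ 𝒞, MeasurableSet C) (hvc : FiniteVC 𝒞) : FinitelyApproximable μ 𝒞 := by
  obtain ⟨d, hd⟩ := hvc
  refine finitelyApproximable_of_approxOn_univ ?_
  by_contra hnot
  -- extract a hereditarily bad set
  have hS₀ : ∃ T, MeasurableSet T ∧ 0 < μ T ∧ Hered μ 𝒞 T := by
    by_contra h2
    apply hnot
    apply approxOn_univ_of_dense
    intro T hTm hTpos
    by_contra h3
    refine h2 ⟨T, hTm, hTpos, ?_⟩
    intro T' hT' hT'm hT'pos hAp
    exact h3 ⟨T', hT', hT'm, hT'pos, hAp⟩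
  obtain ⟨S₀, hS₀m, hS₀pos, hher⟩ := hS₀
  set K : ℕ := 2 ^ (d + 1) with hKdef
  set M : ℕ := 2 ^ K with hMdef
  have hM : 1 ≤ M := Nat.one_le_two_pow
  obtain ⟨A, hAsub, hAm, hApos, hcoh⟩ := exists_coherent (𝒞 := 𝒞) hM hS₀m hS₀pos hher
  have hK : ∀ j, j < K → 2 ^ j ≤ M := by
    intro j hj
    exact Nat.pow_le_pow_right (by norm_num) (le_of_lt (by omega))
  obtain ⟨Cs, hCsmem, hcell⟩ := exists_indep hm hher hAsub hAm hApos
    (fun r D h1 h2 h3 h4 h5 h6 h7 => hcoh r D h1 h2 h3 h4 h5 h6 h7) K hK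
  obtain ⟨Dset, hcard, hsh⟩ := shatters_of_indep d Cs hCsmem hcell
  have := hd Dset hsh
  omega

end VCA

/-- **Bounded VC major case.** If `ℱ` is a separable family of measurable functions
uniformly bounded by `M`, and each level-set family `𝒞_α` has finite VC dimension, then
`ℱ` has finite bracketing numbers with respect to every probability measure. -/
theorem bounded_vc_major_finite_bracketing {X : Type*} [MeasurableSpace X]
    (ℱ : Set (X → ℝ)) (hmeas : ∀ f ∈ ℱ, Measurable f) (hsep : SeparableFamily ℱ)
    (M : ℝ) (hbdd : ∀ f ∈ ℱ, ∀ x, |f x| ≤ M)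
    (hlevel : ∀ α : ℝ, FiniteVC ((fun f => {x | f x ≤ α}) '' ℱ)) :
    ∀ μ : Measure X, IsProbabilityMeasure μ → FiniteBracketing μ ℱ := by

  intro μ hμ ε hε
  classical
  obtain ⟨ℱ₀, hℱ₀sub, hℱ₀ct, hdense⟩ := hsep
  set M₀ : ℝ := |M| + 1 with hM₀def
  have hM₀pos : 0 < M₀ := by positivity
  have hfb : ∀ f ∈ ℱ, ∀ x, -M₀ ≤ f x ∧ f x < M₀ := by
    intro f hf x
    have h1 := hbdd f hf x
    have h2 : |f x| ≤ |M| := h1.trans (le_abs_self M)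
    have h3 := abs_le.mp h2
    exact ⟨by simp only [hM₀def]; linarith [h3.1], by simp only [hM₀def]; linarith [h3.2]⟩
  set ε' : ℝ := ε / 6 with hε'def
  have hε'pos : 0 < ε' := by positivity
  obtain ⟨T, hT⟩ := exists_nat_ge (2 * M₀ / ε')
  have hTbig : 2 * M₀ ≤ T * ε' := by
    rw [div_le_iff₀ hε'pos] at hT
    linarith
  set α : ℕ → ℝ := fun j => -M₀ + j * ε' with hαdef
  have hα0 : α 0 = -M₀ := by simp [hαdef]
  have hαmono : ∀ {i j : ℕ}, i ≤ j → α i ≤ α j := by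
    intro i j hij
    simp only [hαdef, add_le_add_iff_left]
    have h1 : (i : ℝ) ≤ j := Nat.cast_le.mpr hij
    nlinarith
  have hαlb : ∀ j, -M₀ ≤ α j := fun j => by
    have := hαmono (Nat.zero_le j)
    rw [hα0] at this
    exact this
  have hαT : M₀ ≤ α T := by
    simp only [hαdef]
    linarith
  set Gmax : ℝ := (T + 1) * ε' with hGmaxdef
  have hGmaxpos : 0 < Gmax := by positivity
  have hαgap : ∀ j, α j - -M₀ ≤ Gmax → True := fun _ _ => trivial
  set den : ℝ≥0∞ := ((T : ℝ≥0∞) + 1) * (ENNReal.ofReal Gmax + 1) with hdendef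
  have hden0 : den ≠ 0 := by
    refine mul_ne_zero ?_ ?_ <;>
    · intro h
      rcases add_eq_zero.mp h with ⟨_, h1⟩
      exact one_ne_zero h1
  have hdentop : den ≠ ⊤ := by
    refine ENNReal.mul_ne_top ?_ ?_
    · exact ENNReal.add_ne_top.mpr ⟨ENNReal.natCast_ne_top T, ENNReal.one_ne_top⟩
    · exact ENNReal.add_ne_top.mpr ⟨ENNReal.ofReal_ne_top, ENNReal.one_ne_top⟩
  set ε₂ : ℝ≥0∞ := ENNReal.ofReal ε' / den with hε₂def
  have hε₂pos : 0 < ε₂ := ENNReal.div_pos (ENNReal.ofReal_pos.mpr hε'pos).ne' hdentop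
  -- the level partitions
  have hlev : ∀ j : Fin (T + 1), ∃ π : Set (Set X), IsFinitePartition π ∧
      ∀ f ∈ ℱ, μ (piBoundary μ π {x | f x ≤ α j}) ≤ ε₂ := by
    intro j
    have hmj : ∀ C ∈ ((fun f => {x | f x ≤ α (j : ℕ)}) '' ℱ), MeasurableSet C := by
      rintro C ⟨f, hf, rfl⟩
      exact measurableSet_le (hmeas f hf) measurable_const
    obtain ⟨πj, h1, h2⟩ := VCA.finitelyApproximable_of_finiteVC (μ := μ) hmj
      (hlevel (α (j : ℕ))) ε₂ hε₂pos
    exact ⟨πj, h1, fun f hf => h2 _ ⟨f, hf, rfl⟩⟩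
  choose π hπfin hπbd using hlev
  set P : Fin (T + 1) → Finset (Set X) := fun j => (hπfin j).1.toFinset with hPdef
  have hPmem : ∀ (j) (A : Set X), A ∈ P j ↔ A ∈ π j := fun j A => (hπfin j).1.mem_toFinset
  set cells : Finset (Fin (T + 1) → Set X) := Fintype.piFinset P with hcellsdef
  set cell : (Fin (T + 1) → Set X) → Set X := fun c => ⋂ j, c j with hcelldef
  have hcellmeas : ∀ c ∈ cells, MeasurableSet (cell c) := by
    intro c hc
    refine MeasurableSet.iInter fun j => ?_
    exact (hπfin j).2.1 _ ((hPmem j (c j)).mp ((Fintype.mem_piFinset).mp hc j))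
  have hcellsub : ∀ c j, cell c ⊆ c j := fun c j => iInter_subset _ j
  have hcelldisj : ∀ c ∈ cells, ∀ c' ∈ cells, c ≠ c' → Disjoint (cell c) (cell c') := by
    intro c hc c' hc' hne
    have hex : ∃ j, c j ≠ c' j := by
      by_contra hno
      push_neg at hno
      exact hne (funext hno)
    obtain ⟨j, hj⟩ := hex
    have hd := (hπfin j).2.2.1 _ ((hPmem j _).mp ((Fintype.mem_piFinset).mp hc j)) _
      ((hPmem j _).mp ((Fintype.mem_piFinset).mp hc' j)) hj
    exact hd.mono (hcellsub c j) (hcellsub c' j)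
  have hcellcover : ∀ x : X, ∃ c ∈ cells, x ∈ cell c := by
    intro x
    have hx : ∀ j : Fin (T + 1), ∃ A, A ∈ π j ∧ x ∈ A := by
      intro j
      have hU := (hπfin j).2.2.2
      have hx2 : x ∈ ⋃₀ π j := by rw [hU]; trivial
      obtain ⟨A, hA, hxA⟩ := hx2
      exact ⟨A, hA, hxA⟩
    choose cc hc1 hc2 using hx
    refine ⟨cc, (Fintype.mem_piFinset).mpr fun j => (hPmem j (cc j)).mpr (hc1 j), ?_⟩
    exact mem_iInter.mpr hc2
  have hcover : (⋃ c ∈ cells, cell c) = univ := by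
    apply eq_univ_of_forall
    intro x
    obtain ⟨c, hc, hxc⟩ := hcellcover x
    exact mem_biUnion hc hxc
  -- upper and lower level indices per function and cell
  set uIdx : (X → ℝ) → (Fin (T + 1) → Set X) → ℕ := fun f c =>
    if h : ∃ j, μ (cell c ∩ {x | α j < f x}) = 0 then Nat.find h else 0 with huIdxdef
  set lP : (X → ℝ) → (Fin (T + 1) → Set X) → ℕ → Prop := fun f c j =>
    μ (cell c ∩ {x | f x ≤ α j}) = 0 with hlPdef
  set lIdx : (X → ℝ) → (Fin (T + 1) → Set X) → ℕ := fun f c =>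
    Nat.findGreatest (lP f c) T with hlIdxdef
  have huEx : ∀ f ∈ ℱ, ∀ c, ∃ j, μ (cell c ∩ {x | α j < f x}) = 0 := by
    intro f hf c
    refine ⟨T, ?_⟩
    have hemp : cell c ∩ {x | α T < f x} = ∅ := by
      refine eq_empty_iff_forall_notMem.mpr fun x hx => ?_
      have h1 := (hfb f hf x).2
      have h2 : α T < f x := hx.2
      linarith [hαT]
    rw [hemp, measure_empty]
  have huSpec : ∀ f ∈ ℱ, ∀ c, μ (cell c ∩ {x | α (uIdx f c) < f x}) = 0 := by
    intro f hf c
    rw [huIdxdef]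
    simp only [dif_pos (huEx f hf c)]
    exact Nat.find_spec (huEx f hf c)
  have huLe : ∀ f ∈ ℱ, ∀ c, uIdx f c ≤ T := by
    intro f hf c
    rw [huIdxdef]
    simp only [dif_pos (huEx f hf c)]
    refine Nat.find_le (show μ (cell c ∩ {x | α T < f x}) = 0 from ?_)
    have hemp : cell c ∩ {x | α T < f x} = ∅ := by
      refine eq_empty_iff_forall_notMem.mpr fun x hx => ?_
      have h1 := (hfb f hf x).2
      have h2 : α T < f x := hx.2
      linarith [hαT]
    rw [hemp, measure_empty]
  have huMin : ∀ f ∈ ℱ, ∀ c, ∀ j < uIdx f c, μ (cell c ∩ {x | α j < f x}) ≠ 0 := by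
    intro f hf c j hj
    rw [huIdxdef] at hj
    simp only [dif_pos (huEx f hf c)] at hj
    exact Nat.find_min (huEx f hf c) hj
  have hlLe : ∀ f c, lIdx f c ≤ T := fun f c => Nat.findGreatest_le T
  have hlGr : ∀ f c j, lIdx f c < j → j ≤ T → ¬ lP f c j := by
    intro f c j h1 h2
    exact Nat.findGreatest_is_greatest h1 h2
  have hlNone : ∀ f c, ¬ lP f c (lIdx f c) → ∀ j ≤ T, ¬ lP f c j := by
    intro f c hno j hj hPj
    exact hno (Nat.findGreatest_spec hj hPj)
  -- profiles
  set prof : (X → ℝ) → ({c // c ∈ cells} → Fin (T + 1) × Fin (T + 2)) := fun f c =>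
    (⟨min (uIdx f c.1) T, by omega⟩,
     if lP f c.1 (lIdx f c.1) then ⟨lIdx f c.1 + 1, by
        have := hlLe f c.1; omega⟩ else ⟨0, by omega⟩) with hprofdef
  -- values attached to a profile entry
  set gval : Fin (T + 1) × Fin (T + 2) → ℝ := fun p =>
    if (p.2 : ℕ) = 0 then -M₀ else min (α ((p.2 : ℕ) - 1)) (α (p.1 : ℕ)) with hgvaldef
  set hval : Fin (T + 1) × Fin (T + 2) → ℝ := fun p => α (p.1 : ℕ) with hhvaldef
  have hgle : ∀ p, gval p ≤ hval p := by
    intro p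
    simp only [hgvaldef, hhvaldef]
    by_cases h : (p.2 : ℕ) = 0
    · simp only [if_pos h]
      exact hαlb _
    · simp only [if_neg h]
      exact min_le_right _ _
  have hgap : ∀ p, hval p - gval p ≤ Gmax := by
    intro p
    have h1 : hval p ≤ α T := by
      simp only [hhvaldef]
      exact hαmono (by omega : (p.1 : ℕ) ≤ T)
    have h2 : -M₀ ≤ gval p := by
      simp only [hgvaldef]
      by_cases h : (p.2 : ℕ) = 0
      · rw [if_pos h]
      · rw [if_neg h]
        exact le_min (hαlb _) (hαlb _)
    have h3 : α T - -M₀ ≤ Gmax := by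
      simp only [hαdef, hGmaxdef]
      have : (0:ℝ) ≤ ε' := hε'pos.le
      nlinarith
    linarith
  -- raw bracket functions
  set glowF : ({c // c ∈ cells} → Fin (T + 1) × Fin (T + 2)) → X → ℝ := fun q x =>
    ∑ c ∈ cells.attach, (cell c.1).indicator (fun _ => gval (q c)) x with hglowFdef
  set ghighF : ({c // c ∈ cells} → Fin (T + 1) × Fin (T + 2)) → X → ℝ := fun q x =>
    ∑ c ∈ cells.attach, (cell c.1).indicator (fun _ => hval (q c)) x with hghighFdef
  have hglowmeas : ∀ q, Measurable (glowF q) := by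
    intro q
    rw [hglowFdef]
    exact Finset.measurable_sum _ fun c _ => measurable_const.indicator (hcellmeas c.1 c.2)
  have hghighmeas : ∀ q, Measurable (ghighF q) := by
    intro q
    rw [hghighFdef]
    exact Finset.measurable_sum _ fun c _ => measurable_const.indicator (hcellmeas c.1 c.2)
  have hvalg : ∀ q c (hc : c ∈ cells) x, x ∈ cell c → glowF q x = gval (q ⟨c, hc⟩) := by
    intro q c hc x hx
    simp only [hglowFdef]
    rw [Finset.sum_eq_single_of_mem (⟨c, hc⟩ : {c // c ∈ cells}) (Finset.mem_attach _ _)]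
    · exact indicator_of_mem hx _
    · intro b _ hbne
      refine indicator_of_notMem (fun hxb => ?_) _
      have hd := hcelldisj b.1 b.2 c hc (fun h => hbne (Subtype.ext h))
      exact Set.disjoint_left.mp hd hxb hx
  have hvalh : ∀ q c (hc : c ∈ cells) x, x ∈ cell c → ghighF q x = hval (q ⟨c, hc⟩) := by
    intro q c hc x hx
    simp only [hghighFdef]
    rw [Finset.sum_eq_single_of_mem (⟨c, hc⟩ : {c // c ∈ cells}) (Finset.mem_attach _ _)]
    · exact indicator_of_mem hx _
    · intro b _ hbne
      refine indicator_of_notMem (fun hxb => ?_) _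
      have hd := hcelldisj b.1 b.2 c hc (fun h => hbne (Subtype.ext h))
      exact Set.disjoint_left.mp hd hxb hx
  -- exceptional null sets
  set NF : (X → ℝ) → Set X := fun f => ⋃ c ∈ cells,
      ((cell c ∩ {x | α (uIdx f c) < f x}) ∪
        (if lP f c (lIdx f c) then cell c ∩ {x | f x ≤ α (lIdx f c)} else ∅)) with hNFdef
  have hNFmeas : ∀ f ∈ ℱ, MeasurableSet (NF f) := by
    intro f hf
    rw [hNFdef]
    refine cells.measurableSet_biUnion fun c hc => ?_
    refine MeasurableSet.union ?_ ?_
    · exact (hcellmeas c hc).inter (measurableSet_lt measurable_const (hmeas f hf))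
    · split
      · exact (hcellmeas c hc).inter (measurableSet_le (hmeas f hf) measurable_const)
      · exact MeasurableSet.empty
  have hNFnull : ∀ f ∈ ℱ, μ (NF f) = 0 := by
    intro f hf
    rw [hNFdef]
    refine le_antisymm ?_ (zero_le)
    calc μ (⋃ c ∈ cells, ((cell c ∩ {x | α (uIdx f c) < f x}) ∪
          (if lP f c (lIdx f c) then cell c ∩ {x | f x ≤ α (lIdx f c)} else ∅)))
        ≤ ∑ c ∈ cells, μ ((cell c ∩ {x | α (uIdx f c) < f x}) ∪
          (if lP f c (lIdx f c) then cell c ∩ {x | f x ≤ α (lIdx f c)} else ∅)) :=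
          measure_biUnion_finset_le _ _
      _ = 0 := by
          refine Finset.sum_eq_zero fun c _ => ?_
          refine measure_union_null (huSpec f hf c) ?_
          split
          · next h => exact h
          · exact measure_empty
  set Nset : Set X := ⋃ f ∈ ℱ₀, NF f with hNsetdef
  have hNmeas : MeasurableSet Nset := by
    rw [hNsetdef]
    exact MeasurableSet.biUnion hℱ₀ct (fun f hf => hNFmeas f (hℱ₀sub hf))
  have hNnull : μ Nset = 0 := by
    rw [hNsetdef]
    exact (measure_biUnion_null_iff hℱ₀ct).mpr (fun f hf => hNFnull f (hℱ₀sub hf))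
  -- patched bracket functions
  set G : ({c // c ∈ cells} → Fin (T + 1) × Fin (T + 2)) → X → ℝ := fun q x =>
    if x ∈ Nset then -M₀ else glowF q x with hGdef
  set H : ({c // c ∈ cells} → Fin (T + 1) × Fin (T + 2)) → X → ℝ := fun q x =>
    if x ∈ Nset then M₀ else ghighF q x with hHdef
  have hGmeas : ∀ q, Measurable (G q) := by
    intro q
    rw [hGdef]
    exact Measurable.ite hNmeas measurable_const (hglowmeas q)
  have hHmeas : ∀ q, Measurable (H q) := by
    intro q
    rw [hHdef]
    exact Measurable.ite hNmeas measurable_const (hghighmeas q)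
  have hGH : ∀ q x, G q x ≤ H q x := by
    intro q x
    rw [hGdef, hHdef]
    by_cases hx : x ∈ Nset
    · simp only [if_pos hx]
      linarith
    · simp only [if_neg hx]
      obtain ⟨c, hc, hxc⟩ := hcellcover x
      rw [hvalg q c hc x hxc, hvalh q c hc x hxc]
      exact hgle _
  -- pointwise bracketing on the countable dense family
  have hbrack : ∀ f ∈ ℱ₀, ∀ x, G (prof f) x ≤ f x ∧ f x ≤ H (prof f) x := by
    intro f hf x
    have hfF : f ∈ ℱ := hℱ₀sub hf
    rw [hGdef, hHdef]
    by_cases hx : x ∈ Nset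
    · simp only [if_pos hx]
      exact ⟨(hfb f hfF x).1, (hfb f hfF x).2.le⟩
    · simp only [if_neg hx]
      obtain ⟨c, hc, hxc⟩ := hcellcover x
      have hxNF : x ∉ NF f := fun hmem => hx (mem_biUnion hf hmem)
      have hu : ¬ (α (uIdx f c) < f x) := by
        intro hlt
        refine hxNF ?_
        rw [hNFdef]
        exact mem_biUnion hc (Or.inl ⟨hxc, hlt⟩)
      have hminu : min (uIdx f c) T = uIdx f c := min_eq_left (huLe f hfF c)
      constructor
      · rw [hvalg (prof f) c hc x hxc]
        simp only [hprofdef, hgvaldef]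
        by_cases hlp : lP f c (lIdx f c)
        · rw [if_pos hlp]
          simp only [Fin.val_mk, Nat.add_sub_cancel]
          rw [if_neg (Nat.succ_ne_zero _)]
          have hl : ¬ (f x ≤ α (lIdx f c)) := by
            intro hle
            refine hxNF ?_
            rw [hNFdef]
            refine mem_biUnion hc (Or.inr ?_)
            rw [if_pos hlp]
            exact ⟨hxc, hle⟩
          calc min (α (lIdx f c)) (α (min (uIdx f c) T)) ≤ α (lIdx f c) := min_le_left _ _
            _ ≤ f x := (not_le.mp hl).le
        · rw [if_neg hlp]
          simp only [Fin.val_mk]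
          rw [if_pos trivial]
          exact (hfb f hfF x).1
      · rw [hvalh (prof f) c hc x hxc]
        simp only [hprofdef, hhvaldef, Fin.val_mk]
        rw [hminu]
        exact not_lt.mp hu
  -- dichotomy: small gap or inside a level boundary
  have hdichot : ∀ f ∈ ℱ₀, ∀ c, ∀ hc : c ∈ cells,
      hval (prof f ⟨c, hc⟩) - gval (prof f ⟨c, hc⟩) ≤ ε' ∨
      ∃ j : Fin (T + 1), cell c ⊆ piBoundary μ (π j) {x | f x ≤ α (j : ℕ)} := by
    intro f hf c hc
    have hfF : f ∈ ℱ := hℱ₀sub hf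
    have hminu : min (uIdx f c) T = uIdx f c := min_eq_left (huLe f hfF c)
    set u := uIdx f c with hu
    set l := lIdx f c with hl
    have hbd : ∀ j : Fin (T + 1), μ (cell c ∩ {x | f x ≤ α (j : ℕ)}) ≠ 0 →
        μ (cell c ∩ {x | α (j : ℕ) < f x}) ≠ 0 →
        cell c ⊆ piBoundary μ (π j) {x | f x ≤ α (j : ℕ)} := by
      intro j h1 h2
      have hcj : c j ∈ π j :=
        (hPmem _ _).mp ((Fintype.mem_piFinset).mp hc j)
      refine subset_trans (hcellsub c j) (subset_sUnion_of_mem ?_)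
      refine ⟨hcj, ?_⟩
      refine ENNReal.mul_pos ?_ ?_
      · intro h0
        refine h1 (measure_mono_null ?_ h0)
        exact inter_subset_inter_left _ (hcellsub c j)
      · intro h0
        refine h2 (measure_mono_null ?_ h0)
        refine inter_subset_inter (hcellsub c j) ?_
        intro x hx
        simp only [mem_compl_iff, mem_setOf_eq]
        exact not_le.mpr hx
    simp only [hprofdef, hgvaldef, hhvaldef, Fin.val_mk]
    by_cases hlp : lP f c l
    · rw [if_pos hlp]
      simp only [Fin.val_mk, Nat.add_sub_cancel]
      rw [if_neg (Nat.succ_ne_zero _)]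
      rw [hminu]
      rcases le_or_gt (α u) (α l) with hord | hord
      · left
        rw [min_eq_right hord]
        linarith [hε'pos]
      · rw [min_eq_left hord.le]
        rcases le_or_gt (α u - α l) ε' with hsmall | hbig
        · exact Or.inl hsmall
        · right
          have hul : l + 1 < u := by
            by_contra hcon
            push_neg at hcon
            have h1 : (u : ℝ) ≤ (l : ℝ) + 1 := by exact_mod_cast hcon
            have : α u - α l ≤ ε' := by
              simp only [hαdef]
              nlinarith
            linarith
          have hlT : l + 1 ≤ T := by have := huLe f hfF c; omega
          refine ⟨⟨l + 1, by omega⟩, ?_⟩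
          refine hbd ⟨l + 1, by omega⟩ ?_ ?_
          · exact hlGr f c (l + 1) (by omega) hlT
          · exact huMin f hfF c (l + 1) (by omega)
    · rw [if_neg hlp]
      simp only [Fin.val_mk]
      rw [if_pos trivial, hminu]
      rcases le_or_gt (α u - -M₀) ε' with hsmall | hbig
      · exact Or.inl hsmall
      · right
        have hu2 : 2 ≤ u := by
          by_contra hcon
          push_neg at hcon
          interval_cases u
          · simp only [hα0] at hbig
            linarith
          · have : α 1 - -M₀ = ε' := by simp [hαdef]
            linarith
        have hT1 : 1 ≤ T := le_trans (by omega) (huLe f hfF c)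
        refine ⟨⟨1, by omega⟩, ?_⟩
        refine hbd ⟨1, by omega⟩ ?_ ?_
        · exact hlNone f c hlp 1 hT1
        · exact huMin f hfF c 1 (by omega)
  -- the integral estimate
  have hint : ∀ f ∈ ℱ₀, ∫⁻ x, ENNReal.ofReal (H (prof f) x - G (prof f) x) ∂μ
      ≤ ENNReal.ofReal ε := by
    intro f hf
    have hfF : f ∈ ℱ := hℱ₀sub hf
    set q := prof f with hq
    set F : X → ℝ≥0∞ := fun x => ENNReal.ofReal (H q x - G q x) with hF
    have hcoverat : (⋃ c ∈ cells.attach, cell c.1) = univ := by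
      apply eq_univ_of_forall
      intro x
      obtain ⟨c, hc, hxc⟩ := hcellcover x
      exact mem_biUnion (Finset.mem_attach _ ⟨c, hc⟩) hxc
    have hdisjat : Set.PairwiseDisjoint (↑cells.attach) (fun c : {c // c ∈ cells} => cell c.1) :=
      fun c _ c' _ hne => hcelldisj c.1 c.2 c'.1 c'.2 (fun h => hne (Subtype.ext h))
    have hsplit : ∫⁻ x, F x ∂μ = ∑ c ∈ cells.attach, ∫⁻ x in cell c.1, F x ∂μ := by
      rw [← setLIntegral_univ, ← hcoverat]
      exact lintegral_biUnion_finset hdisjat (fun c _ => hcellmeas c.1 c.2) F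
    have hcellbd : ∀ c : {c // c ∈ cells}, ∫⁻ x in cell c.1, F x ∂μ
        ≤ ENNReal.ofReal (hval (q c) - gval (q c)) * μ (cell c.1) := by
      intro c
      have hae : ∀ᵐ x ∂(μ.restrict (cell c.1)),
          F x ≤ ENNReal.ofReal (hval (q c) - gval (q c)) := by
        rw [ae_restrict_iff' (hcellmeas c.1 c.2)]
        have h0 : ∀ x, x ∉ Nset → x ∈ cell c.1 →
            F x ≤ ENNReal.ofReal (hval (q c) - gval (q c)) := by
          intro x hxN hxc
          simp only [hF]
          have hGx : G q x = gval (q c) := by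
            rw [hGdef]
            simp only [if_neg hxN]
            rw [hvalg q c.1 c.2 x hxc]
          have hHx : H q x = hval (q c) := by
            rw [hHdef]
            simp only [if_neg hxN]
            rw [hvalh q c.1 c.2 x hxc]
          rw [hGx, hHx]
        rw [Filter.eventually_iff]
        rw [mem_ae_iff]
        refine measure_mono_null ?_ hNnull
        intro x hx
        simp only [mem_compl_iff, mem_setOf_eq] at hx
        by_contra hxN
        exact hx (fun hxc => h0 x hxN hxc)
      calc ∫⁻ x in cell c.1, F x ∂μ
          ≤ ∫⁻ _x in cell c.1, ENNReal.ofReal (hval (q c) - gval (q c)) ∂μ :=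
            lintegral_mono_ae hae
        _ = ENNReal.ofReal (hval (q c) - gval (q c)) * μ (cell c.1) :=
            setLIntegral_const _ _
    have hsumcells : ∑ c ∈ cells.attach, μ (cell c.1) = 1 := by
      have h1 : ∑ c ∈ cells.attach, μ (cell c.1) = μ (⋃ c ∈ cells.attach, cell c.1) :=
        (measure_biUnion_finset hdisjat (fun c _ => hcellmeas c.1 c.2)).symm
      rw [h1, hcoverat, measure_univ]
    have hbadsum : (∑ c ∈ cells.attach,
        (if (∃ j : Fin (T + 1), cell c.1 ⊆ piBoundary μ (π j) {x | f x ≤ α (j : ℕ)})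
          then μ (cell c.1) else 0)) ≤ ((T : ℝ≥0∞) + 1) * ε₂ := by
      have hstep1 : (∑ c ∈ cells.attach,
          (if (∃ j : Fin (T + 1), cell c.1 ⊆ piBoundary μ (π j) {x | f x ≤ α (j : ℕ)})
            then μ (cell c.1) else 0))
          ≤ ∑ c ∈ cells.attach, ∑ j : Fin (T + 1),
            (if cell c.1 ⊆ piBoundary μ (π j) {x | f x ≤ α (j : ℕ)}
              then μ (cell c.1) else 0) := by
        refine Finset.sum_le_sum fun c _ => ?_
        split
        · next hex =>
          obtain ⟨j₀, hj₀⟩ := hex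
          have h1 : μ (cell c.1) = (if cell c.1 ⊆ piBoundary μ (π j₀) {x | f x ≤ α (j₀ : ℕ)}
              then μ (cell c.1) else 0) := by rw [if_pos hj₀]
          exact h1.le.trans (Finset.single_le_sum (f := fun j : Fin (T+1) =>
            (if cell c.1 ⊆ piBoundary μ (π j) {x | f x ≤ α (j : ℕ)} then μ (cell c.1) else 0))
            (fun _ _ => zero_le) (Finset.mem_univ j₀))
        · exact zero_le
      refine le_trans hstep1 ?_
      rw [Finset.sum_comm]
      have hstep2 : ∀ j : Fin (T + 1), (∑ c ∈ cells.attach,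
          (if cell c.1 ⊆ piBoundary μ (π j) {x | f x ≤ α (j : ℕ)}
            then μ (cell c.1) else 0)) ≤ ε₂ := by
        intro j
        rw [← Finset.sum_filter]
        have h1 : ∑ c ∈ cells.attach.filter
            (fun c => cell c.1 ⊆ piBoundary μ (π j) {x | f x ≤ α (j : ℕ)}), μ (cell c.1)
            = μ (⋃ c ∈ cells.attach.filter
              (fun c => cell c.1 ⊆ piBoundary μ (π j) {x | f x ≤ α (j : ℕ)}), cell c.1) :=
          (measure_biUnion_finset (hdisjat.subset (by
            intro c hcf
            exact Finset.mem_attach _ _)) (fun c _ => hcellmeas c.1 c.2)).symm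
        rw [h1]
        refine le_trans (measure_mono ?_) (hπbd j f hfF)
        refine iUnion₂_subset fun c hcf => ?_
        exact (Finset.mem_filter.mp hcf).2
      calc ∑ j : Fin (T + 1), (∑ c ∈ cells.attach,
            (if cell c.1 ⊆ piBoundary μ (π j) {x | f x ≤ α (j : ℕ)}
              then μ (cell c.1) else 0))
          ≤ ∑ _j : Fin (T + 1), ε₂ := Finset.sum_le_sum fun j _ => hstep2 j
        _ = ((T : ℝ≥0∞) + 1) * ε₂ := by
            rw [Finset.sum_const, Finset.card_univ, Fintype.card_fin, nsmul_eq_mul]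
            push_cast
            ring
    calc ∫⁻ x, F x ∂μ = ∑ c ∈ cells.attach, ∫⁻ x in cell c.1, F x ∂μ := hsplit
      _ ≤ ∑ c ∈ cells.attach, ENNReal.ofReal (hval (q c) - gval (q c)) * μ (cell c.1) :=
          Finset.sum_le_sum fun c _ => hcellbd c
      _ ≤ ∑ c ∈ cells.attach, (ENNReal.ofReal ε' * μ (cell c.1)
            + ENNReal.ofReal Gmax *
              (if (∃ j : Fin (T + 1), cell c.1 ⊆ piBoundary μ (π j) {x | f x ≤ α (j : ℕ)})
                then μ (cell c.1) else 0)) := by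
          refine Finset.sum_le_sum fun c _ => ?_
          rcases hdichot f hf c.1 c.2 with hgood | hbad
          · refine le_trans (mul_le_mul_left (ENNReal.ofReal_le_ofReal hgood) _) le_self_add
          · rw [if_pos hbad]
            refine le_trans (mul_le_mul_left (ENNReal.ofReal_le_ofReal (hgap _)) _) le_add_self
      _ = ENNReal.ofReal ε' * (∑ c ∈ cells.attach, μ (cell c.1))
            + ENNReal.ofReal Gmax * (∑ c ∈ cells.attach,
              (if (∃ j : Fin (T + 1), cell c.1 ⊆ piBoundary μ (π j) {x | f x ≤ α (j : ℕ)})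
                then μ (cell c.1) else 0)) := by
          rw [Finset.sum_add_distrib, ← Finset.mul_sum, ← Finset.mul_sum]
      _ ≤ ENNReal.ofReal ε' * 1 + ENNReal.ofReal Gmax * (((T : ℝ≥0∞) + 1) * ε₂) := by
          refine add_le_add (mul_le_mul_right hsumcells.le _) (mul_le_mul_right hbadsum _)
      _ ≤ ENNReal.ofReal ε' + ENNReal.ofReal ε' := by
          rw [mul_one]
          refine add_le_add le_rfl ?_
          have hle1 : ENNReal.ofReal Gmax * (((T : ℝ≥0∞) + 1) * ε₂)
              ≤ den * ε₂ := by
            rw [hdendef]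
            calc ENNReal.ofReal Gmax * (((T : ℝ≥0∞) + 1) * ε₂)
                = ((T : ℝ≥0∞) + 1) * ENNReal.ofReal Gmax * ε₂ := by
                  ring
              _ ≤ ((T : ℝ≥0∞) + 1) * (ENNReal.ofReal Gmax + 1) * ε₂ := by
                  refine mul_le_mul_left (mul_le_mul_right le_self_add _) _
          refine le_trans hle1 ?_
          rw [hε₂def]
          exact ENNReal.mul_div_le
      _ ≤ ENNReal.ofReal ε := by
          rw [← ENNReal.ofReal_add hε'pos.le hε'pos.le]
          refine ENNReal.ofReal_le_ofReal ?_
          rw [hε'def]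
          linarith
  -- final assembly
  set n : ℕ := Fintype.card ({c // c ∈ cells} → Fin (T + 1) × Fin (T + 2)) with hn
  set eqv : ({c // c ∈ cells} → Fin (T + 1) × Fin (T + 2)) ≃ Fin n := Fintype.equivFin _
    with heqv
  set gfun : Fin n → X → ℝ := fun i =>
    if (∫⁻ x, ENNReal.ofReal (H (eqv.symm i) x - G (eqv.symm i) x) ∂μ ≤ ENNReal.ofReal ε)
      then G (eqv.symm i) else fun _ => 0 with hgfun
  set hfun : Fin n → X → ℝ := fun i =>
    if (∫⁻ x, ENNReal.ofReal (H (eqv.symm i) x - G (eqv.symm i) x) ∂μ ≤ ENNReal.ofReal ε)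
      then H (eqv.symm i) else fun _ => 0 with hhfun
  refine ⟨n, gfun, hfun, ?_, ?_⟩
  · intro i
    by_cases hcond : (∫⁻ x, ENNReal.ofReal (H (eqv.symm i) x - G (eqv.symm i) x) ∂μ
        ≤ ENNReal.ofReal ε)
    · simp only [hgfun, hhfun, if_pos hcond]
      exact ⟨hGmeas _, hHmeas _, hGH _, hcond⟩
    · simp only [hgfun, hhfun, if_neg hcond]
      refine ⟨measurable_const, measurable_const, fun x => le_refl 0, ?_⟩
      simp only [sub_zero, ENNReal.ofReal_zero, lintegral_const, zero_mul]
      exact zero_le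
  · intro f hfF
    obtain ⟨gs, hgs, htend⟩ := hdense f hfF
    set In : ℕ → Fin n := fun k => eqv (prof (gs k)) with hIn
    obtain ⟨i₀, hinf⟩ := Finite.exists_infinite_fiber In
    have hfreq : ∃ᶠ k in atTop, In k = i₀ :=
      Nat.frequently_atTop_iff_infinite.mpr (Set.infinite_coe_iff.mp hinf)
    obtain ⟨φ, hφmono, hφ⟩ := Filter.extraction_of_frequently_atTop hfreq
    have hqeq : ∀ k, prof (gs (φ k)) = eqv.symm i₀ := by
      intro k
      have := hφ k
      rw [hIn] at this
      rw [← this]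
      exact (eqv.symm_apply_apply _).symm
    have hcond : ∫⁻ x, ENNReal.ofReal (H (eqv.symm i₀) x - G (eqv.symm i₀) x) ∂μ
        ≤ ENNReal.ofReal ε := by
      rw [← hqeq 0]
      exact hint (gs (φ 0)) (hgs (φ 0))
    refine ⟨i₀, fun x => ?_⟩
    have hgb : ∀ k, G (eqv.symm i₀) x ≤ gs (φ k) x ∧ gs (φ k) x ≤ H (eqv.symm i₀) x := by
      intro k
      have hb := hbrack (gs (φ k)) (hgs (φ k)) x
      rw [hqeq k] at hb
      exact hb
    have htend' : Tendsto (fun k => gs (φ k) x) atTop (nhds (f x)) :=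
      (htend x).comp hφmono.tendsto_atTop
    constructor
    · have : gfun i₀ = G (eqv.symm i₀) := by rw [hgfun]; simp only [if_pos hcond]
      rw [this]
      exact ge_of_tendsto' htend' (fun k => (hgb k).1)
    · have : hfun i₀ = H (eqv.symm i₀) := by rw [hhfun]; simp only [if_pos hcond]
      rw [this]
      exact le_of_tendsto' htend' (fun k => (hgb k).2)
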